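/- In the avg-EQ reduction instance built from a simple graph H = (V, E) and an integer k ≥ 4 with |V| + |E| ≥ k², under avg-EQ utilities, the following holds: if a coalition C blocks the coalition structure Γ and the vertex player v' belongs to C for some v ∈ V, then the number of edges e ∈ E incident to v whose edge player e' belongs to C is at least k−1. -/

import Mathlib

open Finset
open scoped Classical

section AHGDefs

variable {N : Type*} [Fintype N] [DecidableEq N]

/-- The set of friends of player `i` inside coalition `C`. -/
noncomputable def friendsIn (G : SimpleGraph N) (C : Finset N) (i : N) : Finset N :=
  C.filter fun j => G.Adj i j

/-- The friend-oriented valuation of coalition `C` by player `i`: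
`val_i(C) = n·|F_i ∩ C| − |E_i ∩ C|`. -/
noncomputable def fval (G : SimpleGraph N) (C : Finset N) (i : N) : ℤ :=
  (Fintype.card N : ℤ) * ((friendsIn G C i).card : ℤ)
    - ((C.filter fun j => ¬ G.Adj i j ∧ j ≠ i).card : ℤ)

/-- Average-based equal-treatment utility. -/
noncomputable def utilAvgEQ (G : SimpleGraph N) (C : Finset N) (i : N) : ℚ :=
  (∑ c ∈ insert i (friendsIn G C i), (fval G C c : ℚ)) /
    ((insert i (friendsIn G C i)).card : ℚ)

/-- Average-based altruistic-treatment utility with weight `w`. -/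
noncomputable def utilAvgAL (G : SimpleGraph N) (w : ℚ) (C : Finset N) (i : N) : ℚ :=
  (fval G C i : ℚ) +
    w * (if (friendsIn G C i).Nonempty then
          (∑ c ∈ friendsIn G C i, (fval G C c : ℚ)) / ((friendsIn G C i).card : ℚ)
         else 0)

/-- Min-based equal-treatment utility. -/
noncomputable def utilMinEQ (G : SimpleGraph N) (C : Finset N) (i : N) : ℤ :=
  (insert i (friendsIn G C i)).inf' (insert_nonempty _ _) (fval G C)

/-- Min-based altruistic-treatment utility with weight `w`. -/
noncomputable def utilMinAL (G : SimpleGraph N) (w : ℤ) (C : Finset N) (i : N) : ℤ :=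
  fval G C i +
    w * (if h : (friendsIn G C i).Nonempty then (friendsIn G C i).inf' h (fval G C) else 0)

/-- A coalition structure (partition of the players), given as the map sending
each player to its coalition. -/
structure CoalitionStructure (N : Type*) [Fintype N] [DecidableEq N] where
  part : N → Finset N
  mem_part : ∀ i, i ∈ part i
  part_eq : ∀ i j, j ∈ part i → part j = part i

/-- A (nonempty) coalition `C` blocks the coalition structure `Γ`. -/
def Blocks {α : Type*} [LT α] (util : Finset N → N → α) (Γ : CoalitionStructure N)
    (C : Finset N) : Prop :=
  C.Nonempty ∧ ∀ i ∈ C, util (Γ.part i) i < util C i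

/-- Core stability: no nonempty coalition blocks `Γ`. -/
def CoreStable {α : Type*} [LT α] (util : Finset N → N → α)
    (Γ : CoalitionStructure N) : Prop :=
  ¬ ∃ C : Finset N, Blocks util Γ C

/-- The base clique of a `(d,k')`-dome gadget on `P` with top player `top`
and mid players `mid`. -/
noncomputable def domeBase {d : ℕ} (P : Finset N) (top : N) (mid : Fin d → N) : Finset N :=
  P \ insert top (Finset.univ.image mid)

/-- `P` carries a `(d,k')`-dome gadget of the graph `G`, with top player `top`,
mid players `mid i` and fringe players `fringe i`. -/
structure IsDomeGadget (G : SimpleGraph N) (d k' : ℕ) (P : Finset N) (top : N)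
    (mid fringe : Fin d → N) : Prop where
  card_eq : P.card = k'
  top_mem : top ∈ P
  mid_mem : ∀ i, mid i ∈ P
  mid_inj : Function.Injective mid
  mid_ne_top : ∀ i, mid i ≠ top
  fringe_mem : ∀ i, fringe i ∈ domeBase P top mid
  fringe_inj : Function.Injective fringe
  adj_iff : ∀ x ∈ P, ∀ y ∈ P, (G.Adj x y ↔
    ((x = top ∧ ∃ i, y = mid i) ∨ (y = top ∧ ∃ i, x = mid i) ∨
     (x ∈ domeBase P top mid ∧ y ∈ domeBase P top mid ∧ x ≠ y) ∨
     (∃ i, (x = mid i ∧ y = fringe i) ∨ (y = mid i ∧ x = fringe i))))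

/-- `P` carries a `(d,k')`-dome gadget with top player `top` (mid and fringe
players existentially quantified). -/
def HasDomeGadget (G : SimpleGraph N) (d k' : ℕ) (P : Finset N) (top : N) : Prop :=
  ∃ mid fringe : Fin d → N, IsDomeGadget G d k' P top mid fringe

/-- The gadget size `k' = k + 3·(k choose 2) + 1` of the average-based reductions. -/
def avgK' (k : ℕ) : ℕ := k + 3 * Nat.choose k 2 + 1

variable {V : Type*} [Fintype V] [DecidableEq V]

/-- `Γ` is the coalition structure of the average-based reduction instances: its
coalitions are exactly the gadget player sets. -/
def IsAvgGamma (H : SimpleGraph V) (Pv : V → Finset N) (Pe : Sym2 V → Finset N)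
    (Pve : V → Sym2 V → Finset N) (Γ : CoalitionStructure N) : Prop :=
  (∀ v : V, ∀ i ∈ Pv v, Γ.part i = Pv v) ∧
  (∀ e ∈ H.edgeSet, ∀ i ∈ Pe e, Γ.part i = Pe e) ∧
  (∀ (v : V), ∀ e ∈ H.edgeSet, v ∈ e → ∀ i ∈ Pve v e, Γ.part i = Pve v e)

/-- The avg-EQ reduction instance built from the graph `H` and `k ≥ 4`:
`G` is the constructed network of friends; `Pv v` carries a `(k−1,k')`-dome gadget
with top player `vp v`, `Pe e` a `(2,k')`-dome gadget with top player `ep e`, and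
`Pve v e` a `(2,k')`-dome gadget with top player `bp v e`. Each `bp v e` is further
adjacent to `vp v` and `ep e`, and there are no other edges. -/
structure AvgEQReduction (H : SimpleGraph V) (k : ℕ) (G : SimpleGraph N)
    (Pv : V → Finset N) (Pe : Sym2 V → Finset N) (Pve : V → Sym2 V → Finset N)
    (vp : V → N) (ep : Sym2 V → N) (bp : V → Sym2 V → N) : Prop where
  dome_v : ∀ v : V, HasDomeGadget G (k - 1) (avgK' k) (Pv v) (vp v)
  dome_e : ∀ e ∈ H.edgeSet, HasDomeGadget G 2 (avgK' k) (Pe e) (ep e)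
  dome_ve : ∀ (v : V), ∀ e ∈ H.edgeSet, v ∈ e →
    HasDomeGadget G 2 (avgK' k) (Pve v e) (bp v e)
  disj_vv : ∀ v w : V, v ≠ w → Disjoint (Pv v) (Pv w)
  disj_ee : ∀ e ∈ H.edgeSet, ∀ f ∈ H.edgeSet, e ≠ f → Disjoint (Pe e) (Pe f)
  disj_bb : ∀ (v : V), ∀ e ∈ H.edgeSet, v ∈ e → ∀ (w : V), ∀ f ∈ H.edgeSet, w ∈ f →
    (v, e) ≠ (w, f) → Disjoint (Pve v e) (Pve w f)
  disj_v_e : ∀ (v : V), ∀ e ∈ H.edgeSet, Disjoint (Pv v) (Pe e)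
  disj_v_b : ∀ (v w : V), ∀ f ∈ H.edgeSet, w ∈ f → Disjoint (Pv v) (Pve w f)
  disj_e_b : ∀ e ∈ H.edgeSet, ∀ (w : V), ∀ f ∈ H.edgeSet, w ∈ f →
    Disjoint (Pe e) (Pve w f)
  cover : ∀ x : N, (∃ v : V, x ∈ Pv v) ∨ (∃ e ∈ H.edgeSet, x ∈ Pe e) ∨
    (∃ (v : V), ∃ e ∈ H.edgeSet, v ∈ e ∧ x ∈ Pve v e)
  adj_bv : ∀ (v : V), ∀ e ∈ H.edgeSet, v ∈ e → G.Adj (bp v e) (vp v)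
  adj_be : ∀ (v : V), ∀ e ∈ H.edgeSet, v ∈ e → G.Adj (bp v e) (ep e)
  adj_cases : ∀ x y : N, G.Adj x y →
    (∃ v : V, x ∈ Pv v ∧ y ∈ Pv v) ∨
    (∃ e ∈ H.edgeSet, x ∈ Pe e ∧ y ∈ Pe e) ∨
    (∃ (v : V), ∃ e ∈ H.edgeSet, v ∈ e ∧ x ∈ Pve v e ∧ y ∈ Pve v e) ∨
    (∃ (v : V), ∃ e ∈ H.edgeSet, v ∈ e ∧
      ((x = bp v e ∧ y = vp v) ∨ (y = bp v e ∧ x = vp v))) ∨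
    (∃ (v : V), ∃ e ∈ H.edgeSet, v ∈ e ∧
      ((x = bp v e ∧ y = ep e) ∨ (y = bp v e ∧ x = ep e)))
end AHGDefs


set_option linter.unusedSectionVars false
set_option maxHeartbeats 2000000

section Part1
variable {N : Type*} [Fintype N] [DecidableEq N] {G : SimpleGraph N} {C : Finset N} {i j : N}

lemma mem_friendsIn : j ∈ friendsIn G C i ↔ j ∈ C ∧ G.Adj i j := by
  simp [friendsIn]

lemma friendsIn_subset : friendsIn G C i ⊆ C := Finset.filter_subset _ _

lemma self_not_mem_friendsIn : i ∉ friendsIn G C i := by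
  simp [friendsIn]

lemma insert_friendsIn_subset (hi : i ∈ C) : insert i (friendsIn G C i) ⊆ C := by
  intro z hz
  rcases Finset.mem_insert.1 hz with rfl | hz
  · exact hi
  · exact friendsIn_subset hz

lemma fval_eq (hi : i ∈ C) :
    (fval G C i : ℚ) = ((Fintype.card N : ℚ) + 1) * ((friendsIn G C i).card : ℚ)
      - ((C.card : ℚ) - 1) := by
  have hsub : insert i (friendsIn G C i) ⊆ C := insert_friendsIn_subset hi
  have hfilter : C.filter (fun j => ¬ G.Adj i j ∧ j ≠ i)
      = C \ insert i (friendsIn G C i) := by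
    ext z
    simp only [Finset.mem_filter, Finset.mem_sdiff, Finset.mem_insert, mem_friendsIn]
    constructor
    · rintro ⟨hz, hna, hne⟩
      exact ⟨hz, by rintro (rfl | ⟨_, ha⟩) <;> simp_all⟩
    · rintro ⟨hz, hn⟩
      push_neg at hn
      exact ⟨hz, fun ha => (hn.2 hz) ha, hn.1⟩
  have hcard : (C.filter (fun j => ¬ G.Adj i j ∧ j ≠ i)).card
      = C.card - ((friendsIn G C i).card + 1) := by
    rw [hfilter, Finset.card_sdiff_of_subset hsub, Finset.card_insert_of_notMem self_not_mem_friendsIn]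
  have hle : (friendsIn G C i).card + 1 ≤ C.card := by
    calc (friendsIn G C i).card + 1 = (insert i (friendsIn G C i)).card := by
          rw [Finset.card_insert_of_notMem self_not_mem_friendsIn]
      _ ≤ C.card := Finset.card_le_card hsub
  have hq : ((C.filter (fun j => ¬ G.Adj i j ∧ j ≠ i)).card : ℚ)
      = (C.card : ℚ) - ((friendsIn G C i).card + 1) := by
    rw [hcard, Nat.cast_sub hle]
    push_cast
    ring
  simp only [fval]
  push_cast
  rw [hq]
  ring

lemma utilAvgEQ_repr (hi : i ∈ C) :
    utilAvgEQ G C i = ((Fintype.card N : ℚ) + 1) *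
        ((∑ c ∈ insert i (friendsIn G C i), ((friendsIn G C c).card : ℚ)) /
          ((insert i (friendsIn G C i)).card : ℚ))
      - ((C.card : ℚ) - 1) := by
  set D := insert i (friendsIn G C i) with hD
  have hDpos : (0 : ℚ) < (D.card : ℚ) := by
    have : 0 < D.card := Finset.card_pos.2 ⟨i, Finset.mem_insert_self _ _⟩
    exact_mod_cast this
  have hsum : (∑ c ∈ D, (fval G C c : ℚ))
      = ((Fintype.card N : ℚ) + 1) * (∑ c ∈ D, ((friendsIn G C c).card : ℚ))
        - (D.card : ℚ) * ((C.card : ℚ) - 1) := by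
    have h1 : (∑ c ∈ D, (fval G C c : ℚ))
        = ∑ c ∈ D, (((Fintype.card N : ℚ) + 1) * ((friendsIn G C c).card : ℚ)
            - ((C.card : ℚ) - 1)) := by
      apply Finset.sum_congr rfl
      intro c hc
      exact fval_eq (insert_friendsIn_subset hi hc)
    rw [h1, Finset.sum_sub_distrib, ← Finset.mul_sum, Finset.sum_const, nsmul_eq_mul]
  have hne : (D.card : ℚ) ≠ 0 := ne_of_gt hDpos
  simp only [utilAvgEQ, ← hD]
  rw [hsum]
  field_simp

/-- Upper bound for the utility from pointwise bounds on friend counts. -/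
lemma utilAvgEQ_le (hi : i ∈ C) (M : ℚ)
    (hM : ∀ c ∈ insert i (friendsIn G C i), ((friendsIn G C c).card : ℚ) ≤ M) :
    utilAvgEQ G C i ≤ ((Fintype.card N : ℚ) + 1) * M - ((C.card : ℚ) - 1) := by
  rw [utilAvgEQ_repr hi]
  have hDpos : (0 : ℚ) < ((insert i (friendsIn G C i)).card : ℚ) := by
    have : 0 < (insert i (friendsIn G C i)).card :=
      Finset.card_pos.2 ⟨i, Finset.mem_insert_self _ _⟩
    exact_mod_cast this
  have hnn : (0:ℚ) ≤ (Fintype.card N : ℚ) + 1 := by positivity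
  have hsum : (∑ c ∈ insert i (friendsIn G C i), ((friendsIn G C c).card : ℚ))
      ≤ ((insert i (friendsIn G C i)).card : ℚ) * M := by
    calc (∑ c ∈ insert i (friendsIn G C i), ((friendsIn G C c).card : ℚ))
        ≤ ∑ _c ∈ insert i (friendsIn G C i), M := Finset.sum_le_sum hM
      _ = ((insert i (friendsIn G C i)).card : ℚ) * M := by
          rw [Finset.sum_const, nsmul_eq_mul]
  have : (∑ c ∈ insert i (friendsIn G C i), ((friendsIn G C c).card : ℚ)) /
      ((insert i (friendsIn G C i)).card : ℚ) ≤ M := by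
    rw [div_le_iff₀ hDpos]
    linarith [hsum]
  nlinarith [this, hnn]

/-- Lower bound for the utility from a lower bound on the sum of friend counts. -/
lemma utilAvgEQ_ge (hi : i ∈ C) (L : ℚ)
    (hL : L * ((insert i (friendsIn G C i)).card : ℚ)
        ≤ ∑ c ∈ insert i (friendsIn G C i), ((friendsIn G C c).card : ℚ)) :
    ((Fintype.card N : ℚ) + 1) * L - ((C.card : ℚ) - 1) ≤ utilAvgEQ G C i := by
  rw [utilAvgEQ_repr hi]
  have hDpos : (0 : ℚ) < ((insert i (friendsIn G C i)).card : ℚ) := by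
    have : 0 < (insert i (friendsIn G C i)).card :=
      Finset.card_pos.2 ⟨i, Finset.mem_insert_self _ _⟩
    exact_mod_cast this
  have hnn : (0:ℚ) ≤ (Fintype.card N : ℚ) + 1 := by positivity
  have : L ≤ (∑ c ∈ insert i (friendsIn G C i), ((friendsIn G C c).card : ℚ)) /
      ((insert i (friendsIn G C i)).card : ℚ) := by
    rw [le_div_iff₀ hDpos]
    linarith [hL]
  nlinarith [this, hnn]

end Part1
section Part2
variable {N : Type*} [Fintype N] [DecidableEq N] {G : SimpleGraph N}
variable {d k' : ℕ} {P : Finset N} {top : N} {mid fringe : Fin d → N}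

lemma mem_domeBase {y : N} :
    y ∈ domeBase P top mid ↔ y ∈ P ∧ y ≠ top ∧ ∀ i, y ≠ mid i := by
  simp only [domeBase, Finset.mem_sdiff, Finset.mem_insert, Finset.mem_image,
    Finset.mem_univ, true_and, not_or, not_exists]
  tauto

namespace IsDomeGadget
variable (hg : IsDomeGadget G d k' P top mid fringe)
include hg

lemma base_subset : domeBase P top mid ⊆ P := Finset.sdiff_subset

lemma top_not_mem_base : top ∉ domeBase P top mid := by
  simp [mem_domeBase]

lemma mid_not_mem_base (i : Fin d) : mid i ∉ domeBase P top mid := by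
  simp [mem_domeBase]

lemma fringe_ne_top (i : Fin d) : fringe i ≠ top :=
  (mem_domeBase.1 (hg.fringe_mem i)).2.1

lemma fringe_ne_mid (i j : Fin d) : fringe i ≠ mid j :=
  (mem_domeBase.1 (hg.fringe_mem i)).2.2 j

lemma fringe_mem_P (i : Fin d) : fringe i ∈ P := hg.base_subset (hg.fringe_mem i)

lemma base_card : (domeBase P top mid).card + (d + 1) = k' := by
  have hsub : insert top (Finset.univ.image mid) ⊆ P := by
    intro z hz
    rcases Finset.mem_insert.1 hz with rfl | hz
    · exact hg.top_mem
    · obtain ⟨i, _, rfl⟩ := Finset.mem_image.1 hz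
      exact hg.mid_mem i
  have hcard : (insert top (Finset.univ.image mid)).card = d + 1 := by
    rw [Finset.card_insert_of_notMem, Finset.card_image_of_injective _ hg.mid_inj,
      Finset.card_univ, Fintype.card_fin]
    intro hmem
    obtain ⟨i, _, hi⟩ := Finset.mem_image.1 hmem
    exact hg.mid_ne_top i hi
  rw [domeBase, Finset.card_sdiff_of_subset hsub, hcard, ← hg.card_eq]
  have := Finset.card_le_card hsub
  omega

/-- Adjacency from a base player. -/
lemma adj_of_base {y z : N} (hy : y ∈ domeBase P top mid) (hz : z ∈ P)
    (hadj : G.Adj y z) :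
    (z ∈ domeBase P top mid ∧ z ≠ y) ∨ ∃ i, y = fringe i ∧ z = mid i := by
  obtain ⟨hyP, hyt, hym⟩ := mem_domeBase.1 hy
  rcases (hg.adj_iff y hyP z hz).1 hadj with ⟨h, _⟩ | ⟨_, i, h⟩ | ⟨_, h1, h2⟩ | ⟨i, ⟨h1, _⟩ | ⟨h1, h2⟩⟩
  · exact absurd h hyt
  · exact absurd h (hym i)
  · exact Or.inl ⟨h1, Ne.symm h2⟩
  · exact absurd h1 (hym i)
  · exact Or.inr ⟨i, h2, h1⟩

lemma adj_base_base {y z : N} (hy : y ∈ domeBase P top mid) (hz : z ∈ domeBase P top mid)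
    (hne : y ≠ z) : G.Adj y z :=
  (hg.adj_iff y (hg.base_subset hy) z (hg.base_subset hz)).2 (Or.inr (Or.inr (Or.inl ⟨hy, hz, hne⟩)))

lemma adj_fringe_mid (i : Fin d) : G.Adj (fringe i) (mid i) :=
  (hg.adj_iff _ (hg.fringe_mem_P i) _ (hg.mid_mem i)).2 (Or.inr (Or.inr (Or.inr ⟨i, Or.inr ⟨rfl, rfl⟩⟩)))

lemma adj_top_mid (i : Fin d) : G.Adj top (mid i) :=
  (hg.adj_iff _ hg.top_mem _ (hg.mid_mem i)).2 (Or.inl ⟨rfl, i, rfl⟩)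

/-- Adjacency from a mid player. -/
lemma adj_of_mid {i : Fin d} {z : N} (hz : z ∈ P) (hadj : G.Adj (mid i) z) :
    z = top ∨ z = fringe i := by
  rcases (hg.adj_iff (mid i) (hg.mid_mem i) z hz).1 hadj with ⟨h, _⟩ | ⟨h, _⟩ | ⟨h, _⟩ | ⟨j, ⟨h1, h2⟩ | ⟨h1, h2⟩⟩
  · exact absurd h (hg.mid_ne_top i)
  · exact Or.inl h
  · exact absurd h (hg.mid_not_mem_base i)
  · have : i = j := hg.mid_inj h1
    exact Or.inr (this ▸ h2)
  · exact absurd h2 (hg.fringe_ne_mid j i).symm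

/-- Adjacency from the top player, inside `P`. -/
lemma adj_of_top {z : N} (hz : z ∈ P) (hadj : G.Adj top z) : ∃ i, z = mid i := by
  rcases (hg.adj_iff top hg.top_mem z hz).1 hadj with ⟨_, h⟩ | ⟨_, i, h⟩ | ⟨h, _⟩ | ⟨i, ⟨h1, _⟩ | ⟨_, h2⟩⟩
  · exact h
  · exact absurd h.symm (hg.mid_ne_top i)
  · exact absurd h hg.top_not_mem_base
  · exact absurd h1.symm (hg.mid_ne_top i)
  · exact absurd h2.symm (hg.fringe_ne_top i)

/-- Friends of a non-fringe base player restricted to a set `X` whose `y`-friends stay in `P`. -/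
lemma friendsIn_base_nonfringe {X : Finset N} {y : N} (hy : y ∈ domeBase P top mid)
    (hnf : ∀ i, y ≠ fringe i)
    (hloc : ∀ z, z ∈ X → G.Adj y z → z ∈ P) :
    friendsIn G X y = (domeBase P top mid ∩ X).erase y := by
  ext z
  simp only [mem_friendsIn, Finset.mem_erase, Finset.mem_inter]
  constructor
  · rintro ⟨hzX, hadj⟩
    rcases hg.adj_of_base hy (hloc z hzX hadj) hadj with ⟨hzb, hzy⟩ | ⟨i, hyf, _⟩
    · exact ⟨hzy, hzb, hzX⟩
    · exact absurd hyf (hnf i)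
  · rintro ⟨hzy, hzb, hzX⟩
    exact ⟨hzX, hg.adj_base_base hy hzb (Ne.symm hzy)⟩

/-- Friends of a fringe player. -/
lemma friendsIn_fringe {X : Finset N} {j : Fin d}
    (hloc : ∀ z, z ∈ X → G.Adj (fringe j) z → z ∈ P) :
    friendsIn G X (fringe j) = ((domeBase P top mid ∩ X).erase (fringe j)) ∪ ({mid j} ∩ X) := by
  ext z
  simp only [mem_friendsIn, Finset.mem_union, Finset.mem_erase, Finset.mem_inter,
    Finset.mem_singleton]
  constructor
  · rintro ⟨hzX, hadj⟩
    rcases hg.adj_of_base (hg.fringe_mem j) (hloc z hzX hadj) hadj with ⟨hzb, hzy⟩ | ⟨i, hyf, rfl⟩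
    · exact Or.inl ⟨hzy, hzb, hzX⟩
    · have : j = i := hg.fringe_inj hyf
      exact Or.inr ⟨by rw [this], hzX⟩
  · rintro (⟨hzy, hzb, hzX⟩ | ⟨rfl, hzX⟩)
    · exact ⟨hzX, hg.adj_base_base (hg.fringe_mem j) hzb (Ne.symm hzy)⟩
    · exact ⟨hzX, hg.adj_fringe_mid j⟩

/-- Friends of a mid player. -/
lemma friendsIn_mid {X : Finset N} {i : Fin d}
    (hloc : ∀ z, z ∈ X → G.Adj (mid i) z → z ∈ P) :
    friendsIn G X (mid i) = ({top} ∩ X) ∪ ({fringe i} ∩ X) := by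
  ext z
  simp only [mem_friendsIn, Finset.mem_union, Finset.mem_inter, Finset.mem_singleton]
  constructor
  · rintro ⟨hzX, hadj⟩
    rcases hg.adj_of_mid (hloc z hzX hadj) hadj with rfl | rfl
    · exact Or.inl ⟨rfl, hzX⟩
    · exact Or.inr ⟨rfl, hzX⟩
  · rintro (⟨rfl, hzX⟩ | ⟨rfl, hzX⟩)
    · exact ⟨hzX, (hg.adj_top_mid i).symm⟩
    · exact ⟨hzX, (hg.adj_fringe_mid i).symm⟩

/-- Friends of the top player inside a subset of `P`. -/
lemma friendsIn_top {X : Finset N} (hX : X ⊆ P) :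
    friendsIn G X top = (Finset.univ.image mid) ∩ X := by
  ext z
  simp only [mem_friendsIn, Finset.mem_inter, Finset.mem_image, Finset.mem_univ, true_and]
  constructor
  · rintro ⟨hzX, hadj⟩
    obtain ⟨i, rfl⟩ := hg.adj_of_top (hX hzX) hadj
    exact ⟨⟨i, rfl⟩, hzX⟩
  · rintro ⟨⟨i, rfl⟩, hzX⟩
    exact ⟨hzX, hg.adj_top_mid i⟩

end IsDomeGadget
end Part2
section Arith
lemma avgK'_facts {k k' : ℕ} (hk : 4 ≤ k) (hk' : k' = avgK' k) :
    (k':ℚ) * 2 = 2*(k:ℚ) + 3*(k:ℚ)*((k:ℚ)-1) + 2 := by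
  have h2 : 2 ∣ k * (k-1) := by
    have h := Nat.even_mul_succ_self (k-1)
    rw [Nat.sub_add_cancel (by omega : 1 ≤ k)] at h
    exact Even.two_dvd (by rwa [Nat.mul_comm])
  have hc : 2 * (k.choose 2) = k * (k-1) := by
    rw [Nat.choose_two_right]
    exact Nat.mul_div_cancel' h2
  have h1 : k' * 2 = 2*k + 3*(k*(k-1)) + 2 := by
    rw [hk']; unfold avgK'; omega
  have hcast : ((k * (k-1) : ℕ) : ℚ) = (k:ℚ) * ((k:ℚ)-1) := by
    push_cast [Nat.cast_sub (by omega : 1 ≤ k)]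
    ring
  calc (k':ℚ) * 2 = ((k' * 2 : ℕ) : ℚ) := by push_cast; ring
    _ = ((2*k + 3*(k*(k-1)) + 2 : ℕ) : ℚ) := by rw [h1]
    _ = 2*(k:ℚ) + 3*((k*(k-1) : ℕ) : ℚ) + 2 := by push_cast; ring
    _ = 2*(k:ℚ) + 3*(k:ℚ)*((k:ℚ)-1) + 2 := by rw [hcast]; ring

lemma arith1 (k k' q d n a1 T Csz : ℕ)
    (hk : 4 ≤ k) (hk' : k' = avgK' k) (hd1 : 1 ≤ d) (hdk : d + 1 ≤ k)
    (hq : q + d + 1 = k') (hn : k' * k ^ 2 ≤ n)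
    (ha1 : 1 ≤ a1) (ha1q : a1 ≤ q) (hT : T ≤ d) (hCsz : a1 + T + 1 ≤ Csz)
    (hblock : ((n:ℚ)+1) * (((q:ℚ)*q - q + d) / q) - ((k':ℚ) - 1)
      < ((n:ℚ)+1) * (((a1:ℚ)*a1 - a1 + T) / a1) - ((Csz:ℚ) - 1)) : False := by
  have hkk := avgK'_facts hk hk'
  have hkq : (4:ℚ) ≤ k := by exact_mod_cast hk
  have hd1q : (1:ℚ) ≤ d := by exact_mod_cast hd1
  have hdkq : (d:ℚ) + 1 ≤ k := by exact_mod_cast hdk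
  have hqq : (q:ℚ) + d + 1 = k' := by exact_mod_cast hq
  have hnq : ((k':ℚ)) * k^2 ≤ n := by exact_mod_cast hn
  have ha1q' : (1:ℚ) ≤ a1 := by exact_mod_cast ha1
  have ha1qq : (a1:ℚ) ≤ q := by exact_mod_cast ha1q
  have hTq : (T:ℚ) ≤ d := by exact_mod_cast hT
  have hT0 : (0:ℚ) ≤ T := by positivity
  have hCszq : (a1:ℚ) + T + 1 ≤ Csz := by exact_mod_cast hCsz
  have hq0 : (0:ℚ) < q := by linarith
  have ha0 : (0:ℚ) < a1 := by linarith
  have hq6k : (6:ℚ)*k - 8 ≤ q := by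
    nlinarith [mul_nonneg (show (0:ℚ) ≤ (k:ℚ) - 4 by linarith) (show (0:ℚ) ≤ 3*(k:ℚ) - 3 by linarith)]
  have hk'pos : (0:ℚ) < k' := by linarith
  have hk'2k : (k':ℚ) ≤ 2*(k:ℚ)*k := by nlinarith
  have hn2 : 2*(k':ℚ) ≤ (n:ℚ)+1 := by nlinarith
  have hn4 : 4*(k:ℚ)*k' ≤ (n:ℚ)+1 := by nlinarith
  have hnq2 : (q:ℚ) ≤ (n:ℚ)+1 := by nlinarith
  -- clear denominators
  have h1 : ((n:ℚ)+1) * (((a1:ℚ)*a1 - a1 + T) / a1 - ((q:ℚ)*q - q + d) / q)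
      > (Csz:ℚ) - k' := by linarith
  have hpos : (0:ℚ) < (a1:ℚ) * q := mul_pos ha0 hq0
  have ha1ne : (a1:ℚ) ≠ 0 := ne_of_gt ha0
  have hqne : (q:ℚ) ≠ 0 := ne_of_gt hq0
  have heq : (((a1:ℚ)*a1 - a1 + T)/a1 - ((q:ℚ)*q - q + d)/q) * ((a1:ℚ)*q)
      = ((a1:ℚ)*a1 - a1 + T)*q - ((q:ℚ)*q - q + d)*a1 := by
    field_simp
  have key : ((n:ℚ)+1) * (((a1:ℚ)*a1 - a1 + T)*q - ((q:ℚ)*q - q + d)*a1)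
      > ((Csz:ℚ) - k') * ((a1:ℚ)*q) := by
    have h2 := mul_lt_mul_of_pos_right h1 hpos
    calc ((Csz:ℚ) - k') * ((a1:ℚ)*q)
        < ((n:ℚ)+1) * (((a1:ℚ)*a1 - a1 + T)/a1 - ((q:ℚ)*q - q + d)/q) * ((a1:ℚ)*q) := h2
      _ = ((n:ℚ)+1) * (((a1:ℚ)*a1 - a1 + T)*q - ((q:ℚ)*q - q + d)*a1) := by
          rw [mul_assoc, heq]
  rcases eq_or_lt_of_le ha1q with heqq | hlt
  · -- a1 = q
    obtain rfl : a1 = q := heqq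
    have e2 : (T:ℚ) - d ≤ (Csz:ℚ) - k' := by linarith
    have e3 : ((T:ℚ) - d) * ((a1:ℚ)*a1) ≤ ((Csz:ℚ) - k') * ((a1:ℚ)*a1) :=
      mul_le_mul_of_nonneg_right e2 (by positivity)
    have h4 : (0:ℚ) ≤ ((d:ℚ) - T) * (((n:ℚ)+1) - a1) * a1 :=
      mul_nonneg (mul_nonneg (by linarith) (by linarith)) ha0.le
    nlinarith [key, e3, h4]
  · have hlt' : (a1:ℚ) + 1 ≤ q := by exact_mod_cast hlt
    rcases le_or_gt (2*d) a1 with h2d | h2d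
    · -- 2d ≤ a1
      have h2dq : 2*(d:ℚ) ≤ a1 := by exact_mod_cast h2d
      have e1 : (a1:ℚ)*q*((a1:ℚ)-q) ≤ (a1:ℚ)*q*(-1) :=
        mul_le_mul_of_nonneg_left (by linarith) hpos.le
      have e2 : (T:ℚ)*q ≤ ((a1:ℚ)/2)*q := mul_le_mul_of_nonneg_right (by linarith) hq0.le
      have e3 : (0:ℚ) ≤ (d:ℚ)*a1 := by positivity
      have hB : ((a1:ℚ)*a1 - a1 + T)*q - ((q:ℚ)*q - q + d)*a1 ≤ -((a1:ℚ)*q)/2 := by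
        nlinarith [e1, e2, e3]
      have c1 : ((n:ℚ)+1) * (((a1:ℚ)*a1 - a1 + T)*q - ((q:ℚ)*q - q + d)*a1)
          ≤ ((n:ℚ)+1) * (-((a1:ℚ)*q)/2) :=
        mul_le_mul_of_nonneg_left hB (by positivity)
      have c2 : ((n:ℚ)+1) * (-((a1:ℚ)*q)/2) ≤ -(k':ℚ) * ((a1:ℚ)*q) := by
        nlinarith [mul_le_mul_of_nonneg_right hn2 hpos.le]
      have c3 : -(k':ℚ) * ((a1:ℚ)*q) ≤ ((Csz:ℚ) - k') * ((a1:ℚ)*q) := by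
        apply mul_le_mul_of_nonneg_right _ hpos.le
        linarith
      linarith
    · -- a1 < 2d
      have h2dq : (a1:ℚ) + 1 ≤ 2*(d:ℚ) := by exact_mod_cast h2d
      have ha2k : (a1:ℚ) ≤ 2*(k:ℚ) - 3 := by linarith
      have hqk3 : (0:ℚ) ≤ (q:ℚ) - 2*k + 3 := by linarith
      have g1 : (q:ℚ)*((q:ℚ)-2*k+3) ≤ q*((q:ℚ)-a1) :=
        mul_le_mul_of_nonneg_left (by linarith) hq0.le
      have g2 : (q:ℚ)*((q:ℚ)-a1) ≤ a1*((q:ℚ)*((q:ℚ)-a1)) :=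
        le_mul_of_one_le_left (mul_nonneg hq0.le (by linarith)) ha1q'
      have g3 : (T:ℚ)*q ≤ (d:ℚ)*q := mul_le_mul_of_nonneg_right hTq hq0.le
      have g4 : (q:ℚ)*((3*(k:ℚ)-4) - q) ≤ q*(-(q:ℚ)/2) :=
        mul_le_mul_of_nonneg_left (by linarith) hq0.le
      have e3 : (0:ℚ) ≤ (d:ℚ)*a1 := by positivity
      have hB : ((a1:ℚ)*a1 - a1 + T)*q - ((q:ℚ)*q - q + d)*a1 ≤ -((q:ℚ)*q)/2 := by
        nlinarith [g1, g2, g3, g4, e3, hdkq, hq0]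
      have c1 : ((n:ℚ)+1) * (((a1:ℚ)*a1 - a1 + T)*q - ((q:ℚ)*q - q + d)*a1)
          ≤ ((n:ℚ)+1) * (-((q:ℚ)*q)/2) :=
        mul_le_mul_of_nonneg_left hB (by positivity)
      have m1 : 2*(k':ℚ)*a1 ≤ (n:ℚ)+1 := by nlinarith
      have c2 : ((n:ℚ)+1) * (-((q:ℚ)*q)/2) ≤ -(k':ℚ) * ((a1:ℚ)*q) := by
        nlinarith [mul_le_mul_of_nonneg_right m1 hq0.le,
          mul_le_mul_of_nonneg_left (show (1:ℚ) ≤ q by linarith)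
            (mul_pos (show (0:ℚ) < (n:ℚ)+1 by linarith) hq0).le]
      have c3 : -(k':ℚ) * ((a1:ℚ)*q) ≤ ((Csz:ℚ) - k') * ((a1:ℚ)*q) := by
        apply mul_le_mul_of_nonneg_right _ hpos.le
        linarith
      linarith
end Arith
section Claims
variable {N : Type*} [Fintype N] [DecidableEq N] {G : SimpleGraph N}
  {Γ : CoalitionStructure N} {C : Finset N}
  {k d k' : ℕ} {P : Finset N} {top w : N} {mid fringe : Fin d → N}

namespace IsDomeGadget
variable (hg : IsDomeGadget G d k' P top mid fringe)
include hg

lemma fringe_image_subset : Finset.univ.image fringe ⊆ domeBase P top mid := by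
  intro z hz
  obtain ⟨i, _, rfl⟩ := Finset.mem_image.1 hz
  exact hg.fringe_mem i

lemma fringe_image_card : (Finset.univ.image fringe).card = d := by
  rw [Finset.card_image_of_injective _ hg.fringe_inj, Finset.card_univ, Fintype.card_fin]

lemma base_inter_fringe : domeBase P top mid ∩ Finset.univ.image fringe
    = Finset.univ.image fringe :=
  Finset.inter_eq_right.2 hg.fringe_image_subset

/-- Lower bound on the number of friends of a base player within `P`. -/
lemma sum_friends_base_ge :
    (domeBase P top mid).card * ((domeBase P top mid).card - 1) + d
      ≤ ∑ z ∈ domeBase P top mid, (friendsIn G P z).card := by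
  set Bs := domeBase P top mid with hBs
  have hpoint : ∀ z ∈ Bs, (Bs.card - 1) + (if z ∈ Finset.univ.image fringe then 1 else 0)
      ≤ (friendsIn G P z).card := by
    intro z hz
    by_cases hzf : z ∈ Finset.univ.image fringe
    · obtain ⟨j, _, rfl⟩ := Finset.mem_image.1 hzf
      have hsub : insert (mid j) (Bs.erase (fringe j)) ⊆ friendsIn G P (fringe j) := by
        rw [hg.friendsIn_fringe (fun z hz _ => hz)]
        intro u hu
        rcases Finset.mem_insert.1 hu with rfl | hu
        · exact Finset.mem_union_right _ (by simp [hg.mid_mem j])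
        · apply Finset.mem_union_left
          rw [Finset.inter_eq_left.2 hg.base_subset]
          exact hu
      have hcard : (insert (mid j) (Bs.erase (fringe j))).card = (Bs.card - 1) + 1 := by
        rw [Finset.card_insert_of_notMem, Finset.card_erase_of_mem (hg.fringe_mem j)]
        intro hmem
        exact hg.mid_not_mem_base j (Finset.erase_subset _ _ hmem)
      simp only [if_pos hzf]
      calc (Bs.card - 1) + 1 = (insert (mid j) (Bs.erase (fringe j))).card := hcard.symm
        _ ≤ (friendsIn G P (fringe j)).card := Finset.card_le_card hsub
    · have hsub : Bs.erase z ⊆ friendsIn G P z := by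
        intro u hu
        rw [mem_friendsIn]
        exact ⟨hg.base_subset (Finset.mem_of_mem_erase hu),
          hg.adj_base_base hz (Finset.mem_of_mem_erase hu)
            (Ne.symm (Finset.ne_of_mem_erase hu))⟩
      simp only [if_neg hzf, add_zero]
      calc Bs.card - 1 = (Bs.erase z).card := (Finset.card_erase_of_mem hz).symm
        _ ≤ (friendsIn G P z).card := Finset.card_le_card hsub
  calc Bs.card * (Bs.card - 1) + d
      = ∑ _z ∈ Bs, (Bs.card - 1) + (Finset.univ.image fringe).card := by
        rw [Finset.sum_const, smul_eq_mul, hg.fringe_image_card]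
    _ = ∑ _z ∈ Bs, (Bs.card - 1) + (Bs ∩ Finset.univ.image fringe).card := by
        rw [hg.base_inter_fringe]
    _ = ∑ z ∈ Bs, ((Bs.card - 1) + (if z ∈ Finset.univ.image fringe then 1 else 0)) := by
        rw [Finset.sum_add_distrib]
        congr 1
        rw [← Finset.filter_mem_eq_inter, Finset.card_filter]
    _ ≤ ∑ z ∈ Bs, (friendsIn G P z).card := Finset.sum_le_sum hpoint

/-- Claim 1: no non-fringe base player belongs to a blocking coalition. -/
lemma base_nonfringe_not_mem
    (hk : 4 ≤ k) (hk' : k' = avgK' k) (hd1 : 1 ≤ d) (hdk : d + 1 ≤ k)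
    (hn : k' * k ^ 2 ≤ Fintype.card N)
    (hloc : ∀ y ∈ P, y ≠ top → ∀ z, G.Adj y z → z ∈ P)
    (hpart : ∀ y ∈ P, Γ.part y = P)
    (hC : Blocks (utilAvgEQ G) Γ C)
    (hw : w ∈ C) (hwtop : w ∉ P ∨ w = top)
    {y : N} (hyb : y ∈ domeBase P top mid) (hynf : ∀ i, y ≠ fringe i) : y ∉ C := by
  intro hyC
  set Bs := domeBase P top mid with hBs
  have hyP : y ∈ P := hg.base_subset hyb
  have hytop : y ≠ top := (mem_domeBase.1 hyb).2.1
  set q := Bs.card with hqdef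
  have hq : q + (d + 1) = k' := hg.base_card
  have hq1 : 1 ≤ q := by
    have : y ∈ Bs := hyb
    exact Finset.card_pos.2 ⟨y, this⟩
  -- Γ-side structure
  have hfrP : friendsIn G P y = (Bs ∩ P).erase y :=
    hg.friendsIn_base_nonfringe hyb hynf (fun z hz _ => hz)
  have hBsP : Bs ∩ P = Bs := Finset.inter_eq_left.2 hg.base_subset
  have hDΓ : insert y (friendsIn G P y) = Bs := by
    rw [hfrP, hBsP, Finset.insert_erase hyb]
  -- C-side structure
  set A := Bs ∩ C with hAdef
  have hyA : y ∈ A := Finset.mem_inter.2 ⟨hyb, hyC⟩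
  set a1 := A.card with ha1def
  have ha1 : 1 ≤ a1 := Finset.card_pos.2 ⟨y, hyA⟩
  have ha1q : a1 ≤ q := Finset.card_le_card Finset.inter_subset_left
  have hfrC : friendsIn G C y = A.erase y := by
    rw [hg.friendsIn_base_nonfringe hyb hynf (fun z hz hadj => hloc y hyP hytop z hadj)]
  have hDC : insert y (friendsIn G C y) = A := by rw [hfrC, Finset.insert_erase hyA]
  set I := Finset.univ.filter (fun i => fringe i ∈ A ∧ mid i ∈ C) with hIdef
  set T := I.card with hTdef
  have hT : T ≤ d := by
    calc T ≤ (Finset.univ : Finset (Fin d)).card := Finset.card_filter_le _ _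
      _ = d := by rw [Finset.card_univ, Fintype.card_fin]
  -- upper bound on the C-side sum
  have hup : ∀ z ∈ A, (friendsIn G C z).card
      ≤ (a1 - 1) + (if (∃ j, z = fringe j ∧ mid j ∈ C) then 1 else 0) := by
    intro z hzA
    obtain ⟨hzb, hzC⟩ := Finset.mem_inter.1 hzA
    have hzP : z ∈ P := hg.base_subset hzb
    have hztop : z ≠ top := (mem_domeBase.1 hzb).2.1
    have hlocz : ∀ u, u ∈ C → G.Adj z u → u ∈ P := fun u hu hadj => hloc z hzP hztop u hadj
    by_cases hzf : ∃ j, z = fringe j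
    · obtain ⟨j, rfl⟩ := hzf
      rw [hg.friendsIn_fringe hlocz]
      calc (((Bs ∩ C).erase (fringe j)) ∪ ({mid j} ∩ C)).card
          ≤ ((Bs ∩ C).erase (fringe j)).card + ({mid j} ∩ C).card := Finset.card_union_le _ _
        _ = (a1 - 1) + ({mid j} ∩ C).card := by
            rw [← hAdef, Finset.card_erase_of_mem hzA]
        _ ≤ (a1 - 1) + (if (∃ j', fringe j = fringe j' ∧ mid j' ∈ C) then 1 else 0) := by
            by_cases hmj : mid j ∈ C
            · have : ({mid j} ∩ C) = {mid j} := by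
                rw [Finset.inter_eq_left]; simp [hmj]
              rw [this, if_pos ⟨j, rfl, hmj⟩, Finset.card_singleton]
            · have : ({mid j} ∩ C) = ∅ := by
                rw [Finset.eq_empty_iff_forall_notMem]
                intro u hu
                obtain ⟨h1, h2⟩ := Finset.mem_inter.1 hu
                rw [Finset.mem_singleton] at h1
                exact hmj (h1 ▸ h2)
              rw [this]
              simp
    · rw [hg.friendsIn_base_nonfringe hzb (fun i hi => hzf ⟨i, hi⟩) hlocz, ← hAdef,
        Finset.card_erase_of_mem hzA]
      exact Nat.le_add_right _ _
  have hfilter_eq : A.filter (fun z => ∃ j, z = fringe j ∧ mid j ∈ C) = I.image fringe := by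
    ext z
    constructor
    · intro hz
      obtain ⟨hzA, j, rfl, hmj⟩ := Finset.mem_filter.1 hz
      exact Finset.mem_image.2 ⟨j, Finset.mem_filter.2 ⟨Finset.mem_univ j, hzA, hmj⟩, rfl⟩
    · intro hz
      obtain ⟨j, hj, rfl⟩ := Finset.mem_image.1 hz
      obtain ⟨-, hjA, hjm⟩ := Finset.mem_filter.1 hj
      exact Finset.mem_filter.2 ⟨hjA, j, rfl, hjm⟩
  have hsumC : ∑ z ∈ A, (friendsIn G C z).card ≤ a1 * (a1 - 1) + T := by
    calc ∑ z ∈ A, (friendsIn G C z).card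
        ≤ ∑ z ∈ A, ((a1 - 1) + (if (∃ j, z = fringe j ∧ mid j ∈ C) then 1 else 0)) :=
          Finset.sum_le_sum hup
      _ = a1 * (a1 - 1) + (A.filter (fun z => ∃ j, z = fringe j ∧ mid j ∈ C)).card := by
          rw [Finset.sum_add_distrib, Finset.sum_const, smul_eq_mul, Finset.card_filter]
      _ = a1 * (a1 - 1) + T := by
          rw [hfilter_eq, Finset.card_image_of_injective _ hg.fringe_inj]
  -- lower bound on |C|
  have hCsz : a1 + T + 1 ≤ C.card := by
    have hsub : (A ∪ I.image mid) ∪ {w} ⊆ C := by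
      intro u hu
      rcases Finset.mem_union.1 hu with hu | hu
      · rcases Finset.mem_union.1 hu with hu | hu
        · exact (Finset.mem_inter.1 hu).2
        · obtain ⟨j, hj, rfl⟩ := Finset.mem_image.1 hu
          exact (Finset.mem_filter.1 hj).2.2
      · rw [Finset.mem_singleton.1 hu]; exact hw
    have hwb : w ∉ Bs := by
      rcases hwtop with hwP | rfl
      · exact fun h => hwP (hg.base_subset h)
      · exact hg.top_not_mem_base
    have hwm : ∀ i, w ≠ mid i := by
      rcases hwtop with hwP | rfl
      · exact fun i h => hwP (h ▸ hg.mid_mem i)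
      · exact fun i h => hg.mid_ne_top i h.symm
    have hd1' : Disjoint A (I.image mid) := by
      rw [Finset.disjoint_left]
      intro u huA humid
      obtain ⟨j, _, rfl⟩ := Finset.mem_image.1 humid
      exact hg.mid_not_mem_base j (Finset.mem_inter.1 huA).1
    have hd2' : Disjoint (A ∪ I.image mid) {w} := by
      rw [Finset.disjoint_right]
      intro u hu
      rw [Finset.mem_singleton.1 hu]
      intro hmem
      rcases Finset.mem_union.1 hmem with h | h
      · exact hwb (Finset.mem_inter.1 h).1
      · obtain ⟨j, _, hj⟩ := Finset.mem_image.1 h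
        exact hwm j hj.symm
    calc a1 + T + 1
        = ((A ∪ I.image mid) ∪ {w}).card := by
          rw [Finset.card_union_of_disjoint hd2', Finset.card_union_of_disjoint hd1',
            Finset.card_image_of_injective _ hg.mid_inj, Finset.card_singleton]
      _ ≤ C.card := Finset.card_le_card hsub
  -- assemble the blocking inequality
  have hne : (Fintype.card N : ℚ) + 1 ≥ 0 := by positivity
  have hblock := hC.2 y hyC
  rw [hpart y hyP] at hblock
  have hΓlow : ((Fintype.card N : ℚ) + 1) * (((q:ℚ)*q - q + d) / q) - ((k':ℚ) - 1)
      ≤ utilAvgEQ G P y := by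
    have hmain := utilAvgEQ_ge (G := G) (C := P) (i := y) hyP (((q:ℚ)*q - q + d) / q) ?_
    · rwa [hg.card_eq] at hmain
    · rw [hDΓ]
      have hqne : (q:ℚ) ≠ 0 := by
        have : (0:ℚ) < q := by exact_mod_cast hq1
        exact ne_of_gt this
      rw [div_mul_cancel₀ _ hqne]
      have hnat := hg.sum_friends_base_ge (G := G)
      have hcast : ((q * (q - 1) + d : ℕ) : ℚ) ≤ ∑ z ∈ Bs, ((friendsIn G P z).card : ℚ) := by
        rw [← Nat.cast_sum]
        exact_mod_cast hnat
      calc (q:ℚ)*q - q + d = ((q * (q - 1) + d : ℕ) : ℚ) := by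
            push_cast [Nat.cast_sub hq1]
            ring
        _ ≤ _ := hcast
  have hCup : utilAvgEQ G C y
      ≤ ((Fintype.card N : ℚ) + 1) * (((a1:ℚ)*a1 - a1 + T) / a1) - ((C.card:ℚ) - 1) := by
    rw [utilAvgEQ_repr hyC, hDC]
    have ha0 : (0:ℚ) < a1 := by exact_mod_cast ha1
    have hsQ : (∑ z ∈ A, ((friendsIn G C z).card : ℚ)) ≤ (a1:ℚ)*a1 - a1 + T := by
      have hcast : (∑ z ∈ A, ((friendsIn G C z).card : ℚ)) ≤ ((a1 * (a1 - 1) + T : ℕ) : ℚ) := by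
        rw [← Nat.cast_sum]
        exact_mod_cast hsumC
      calc (∑ z ∈ A, ((friendsIn G C z).card : ℚ)) ≤ ((a1 * (a1 - 1) + T : ℕ) : ℚ) := hcast
        _ = (a1:ℚ)*a1 - a1 + T := by
            push_cast [Nat.cast_sub ha1]
            ring
    have hdivle : (∑ z ∈ A, ((friendsIn G C z).card : ℚ)) / (a1:ℚ)
        ≤ ((a1:ℚ)*a1 - a1 + T) / a1 := by
      gcongr
    exact sub_le_sub_right (mul_le_mul_of_nonneg_left hdivle hne) _
  exact arith1 k k' q d (Fintype.card N) a1 T C.card hk hk' hd1 hdk (by omega) hn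
    ha1 ha1q hT hCsz (lt_of_le_of_lt hΓlow (lt_of_lt_of_le hblock hCup))

end IsDomeGadget
end Claims
section Claims2
lemma arith2 (k k' q d n : ℕ) (Cz : ℚ)
    (hk : 4 ≤ k) (hk' : k' = avgK' k) (hd1 : 1 ≤ d) (hdk : d + 1 ≤ k)
    (hq : q + (d + 1) = k') (hn : k' * k ^ 2 ≤ n) (hCz : 1 ≤ Cz)
    (hblock : ((n:ℚ)+1) * (((q:ℚ)*q - q) / ((q:ℚ)+1)) - ((k':ℚ) - 1)
      < ((n:ℚ)+1) * ((d:ℚ)+2) - (Cz - 1)) : False := by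
  have hkk := avgK'_facts hk hk'
  have hkq : (4:ℚ) ≤ k := by exact_mod_cast hk
  have hd1q : (1:ℚ) ≤ d := by exact_mod_cast hd1
  have hdkq : (d:ℚ) + 1 ≤ k := by exact_mod_cast hdk
  have hqq : (q:ℚ) + (d + 1) = k' := by exact_mod_cast hq
  have hnq : ((k':ℚ)) * k^2 ≤ n := by exact_mod_cast hn
  have hqd5 : (d:ℚ) + 5 ≤ q := by nlinarith
  have hq0 : (0:ℚ) < q := by linarith
  have hn1 : (k':ℚ) ≤ (n:ℚ) + 1 := by nlinarith
  have hdiv : (q:ℚ) - 2 ≤ ((q:ℚ)*q - q) / ((q:ℚ)+1) := by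
    rw [le_div_iff₀ (by linarith : (0:ℚ) < (q:ℚ)+1)]
    nlinarith
  have h1 : ((n:ℚ)+1) * ((q:ℚ)-2) ≤ ((n:ℚ)+1) * (((q:ℚ)*q - q) / ((q:ℚ)+1)) :=
    mul_le_mul_of_nonneg_left hdiv (by positivity)
  nlinarith [h1, hblock]

lemma arith3 (k k' q d n : ℕ) (Cz : ℚ)
    (hk : 4 ≤ k) (hk' : k' = avgK' k) (hd1 : 1 ≤ d) (hdk : d + 1 ≤ k)
    (hq : q + (d + 1) = k') (hn : k' * k ^ 2 ≤ n) (hCz : 1 ≤ Cz)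
    (hblock : ((n:ℚ)+1) * ((q:ℚ)/3) - ((k':ℚ) - 1)
      < ((n:ℚ)+1) * 4 - (Cz - 1)) : False := by
  have hkk := avgK'_facts hk hk'
  have hkq : (4:ℚ) ≤ k := by exact_mod_cast hk
  have hd1q : (1:ℚ) ≤ d := by exact_mod_cast hd1
  have hdkq : (d:ℚ) + 1 ≤ k := by exact_mod_cast hdk
  have hqq : (q:ℚ) + (d + 1) = k' := by exact_mod_cast hq
  have hnq : ((k':ℚ)) * k^2 ≤ n := by exact_mod_cast hn
  have hq15 : (15:ℚ) ≤ q := by nlinarith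
  have hn1 : (k':ℚ) ≤ (n:ℚ) + 1 := by nlinarith
  nlinarith [hblock]

variable {N : Type*} [Fintype N] [DecidableEq N] {G : SimpleGraph N}
  {Γ : CoalitionStructure N} {C : Finset N}
  {k d k' : ℕ} {P : Finset N} {top w : N} {mid fringe : Fin d → N}

namespace IsDomeGadget
variable (hg : IsDomeGadget G d k' P top mid fringe)
include hg

/-- Claim 2: no fringe player belongs to a blocking coalition. -/
lemma fringe_not_mem
    (hk : 4 ≤ k) (hk' : k' = avgK' k) (hd1 : 1 ≤ d) (hdk : d + 1 ≤ k)
    (hn : k' * k ^ 2 ≤ Fintype.card N)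
    (hloc : ∀ y ∈ P, y ≠ top → ∀ z, G.Adj y z → z ∈ P)
    (hpart : ∀ y ∈ P, Γ.part y = P)
    (hC : Blocks (utilAvgEQ G) Γ C)
    (hw : w ∈ C) (hwtop : w ∉ P ∨ w = top)
    (j : Fin d) : fringe j ∉ C := by
  intro hjC
  set Bs := domeBase P top mid with hBs
  set q := Bs.card with hqdef
  have hq : q + (d + 1) = k' := hg.base_card
  have hjb : fringe j ∈ Bs := hg.fringe_mem j
  have hjP : fringe j ∈ P := hg.base_subset hjb
  have hjtop : fringe j ≠ top := hg.fringe_ne_top j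
  have hq1 : 1 ≤ q := Finset.card_pos.2 ⟨fringe j, hjb⟩
  have hlocj : ∀ u, u ∈ C → G.Adj (fringe j) u → u ∈ P :=
    fun u hu hadj => hloc _ hjP hjtop u hadj
  -- every base player of this gadget in C is a fringe player
  have hA_sub : Bs ∩ C ⊆ Finset.univ.image fringe := by
    intro z hz
    obtain ⟨hzb, hzC⟩ := Finset.mem_inter.1 hz
    by_contra hcon
    have hnf : ∀ i, z ≠ fringe i := by
      intro i hzi
      exact hcon (Finset.mem_image.2 ⟨i, Finset.mem_univ i, hzi.symm⟩)
    exact hg.base_nonfringe_not_mem hk hk' hd1 hdk hn hloc hpart hC hw hwtop hzb hnf hzC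
  have ha1d : (Bs ∩ C).card ≤ d := by
    calc (Bs ∩ C).card ≤ (Finset.univ.image fringe).card := Finset.card_le_card hA_sub
      _ = d := hg.fringe_image_card
  -- C-side upper bound
  have hCup : utilAvgEQ G C (fringe j)
      ≤ ((Fintype.card N : ℚ) + 1) * ((d:ℚ)+2) - ((C.card:ℚ) - 1) := by
    apply utilAvgEQ_le hjC
    intro c hc
    rcases Finset.mem_insert.1 hc with rfl | hc
    · -- c = fringe j: it is in Bs ∩ C
      have hcb : fringe j ∈ Bs ∩ C := Finset.mem_inter.2 ⟨hjb, hjC⟩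
      have hfr : friendsIn G C (fringe j) = ((Bs ∩ C).erase (fringe j)) ∪ ({mid j} ∩ C) :=
        hg.friendsIn_fringe hlocj
      have : (friendsIn G C (fringe j)).card ≤ ((Bs ∩ C).card - 1) + 1 := by
        rw [hfr]
        calc (((Bs ∩ C).erase (fringe j)) ∪ ({mid j} ∩ C)).card
            ≤ ((Bs ∩ C).erase (fringe j)).card + ({mid j} ∩ C).card := Finset.card_union_le _ _
          _ ≤ ((Bs ∩ C).card - 1) + 1 := by
              rw [Finset.card_erase_of_mem hcb]
              exact Nat.add_le_add_left (le_trans (Finset.card_le_card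
                Finset.inter_subset_left) (by simp)) _
      have hle : (friendsIn G C (fringe j)).card ≤ d := by omega
      calc ((friendsIn G C (fringe j)).card : ℚ) ≤ (d:ℚ) := by exact_mod_cast hle
        _ ≤ (d:ℚ) + 2 := by linarith
    · rw [hg.friendsIn_fringe hlocj] at hc
      rcases Finset.mem_union.1 hc with hc | hc
      · -- c is a base player of the gadget in C, hence a fringe player
        have hcA : c ∈ Bs ∩ C := Finset.mem_of_mem_erase hc
        obtain ⟨i, -, rfl⟩ := Finset.mem_image.1 (hA_sub hcA)
        have hcC : fringe i ∈ C := (Finset.mem_inter.1 hcA).2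
        have hloci : ∀ u, u ∈ C → G.Adj (fringe i) u → u ∈ P :=
          fun u hu hadj => hloc _ (hg.fringe_mem_P i) (hg.fringe_ne_top i) u hadj
        have hfr : friendsIn G C (fringe i) = ((Bs ∩ C).erase (fringe i)) ∪ ({mid i} ∩ C) :=
          hg.friendsIn_fringe hloci
        have : (friendsIn G C (fringe i)).card ≤ ((Bs ∩ C).card - 1) + 1 := by
          rw [hfr]
          calc (((Bs ∩ C).erase (fringe i)) ∪ ({mid i} ∩ C)).card
              ≤ ((Bs ∩ C).erase (fringe i)).card + ({mid i} ∩ C).card :=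
                Finset.card_union_le _ _
            _ ≤ ((Bs ∩ C).card - 1) + 1 := by
                rw [Finset.card_erase_of_mem hcA]
                exact Nat.add_le_add_left (le_trans (Finset.card_le_card
                  Finset.inter_subset_left) (by simp)) _
        have hle : (friendsIn G C (fringe i)).card ≤ d := by omega
        calc ((friendsIn G C (fringe i)).card : ℚ) ≤ (d:ℚ) := by exact_mod_cast hle
          _ ≤ (d:ℚ) + 2 := by linarith
      · -- c = mid j
        obtain ⟨hc1, -⟩ := Finset.mem_inter.1 hc
        rw [Finset.mem_singleton.1 hc1]
        have hlocm : ∀ u, u ∈ C → G.Adj (mid j) u → u ∈ P :=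
          fun u hu hadj => hloc _ (hg.mid_mem j) (hg.mid_ne_top j) u hadj
        have : (friendsIn G C (mid j)).card ≤ 2 := by
          rw [hg.friendsIn_mid hlocm]
          calc (({top} ∩ C) ∪ ({fringe j} ∩ C)).card
              ≤ ({top} ∩ C).card + ({fringe j} ∩ C).card := Finset.card_union_le _ _
            _ ≤ 1 + 1 := Nat.add_le_add
                (le_trans (Finset.card_le_card Finset.inter_subset_left) (by simp))
                (le_trans (Finset.card_le_card Finset.inter_subset_left) (by simp))
        calc ((friendsIn G C (mid j)).card : ℚ) ≤ (2:ℚ) := by exact_mod_cast this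
          _ ≤ (d:ℚ) + 2 := by
              have : (0:ℚ) ≤ d := by positivity
              linarith
  -- Γ-side lower bound
  have hDΓ : insert (fringe j) (friendsIn G P (fringe j)) = insert (mid j) Bs := by
    rw [hg.friendsIn_fringe (fun z hz _ => hz), Finset.inter_eq_left.2 hg.base_subset,
      Finset.inter_eq_left.2 (by simp [hg.mid_mem j] : {mid j} ⊆ P),
      ← Finset.insert_union, Finset.insert_erase hjb, Finset.union_comm,
      ← Finset.insert_eq]
  have hmidnb : mid j ∉ Bs := hg.mid_not_mem_base j
  have hDΓcard : (insert (fringe j) (friendsIn G P (fringe j))).card = q + 1 := by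
    rw [hDΓ, Finset.card_insert_of_notMem hmidnb]
  have hΓlow : ((Fintype.card N : ℚ) + 1) * (((q:ℚ)*q - q) / ((q:ℚ)+1)) - ((k':ℚ) - 1)
      ≤ utilAvgEQ G P (fringe j) := by
    have hmain := utilAvgEQ_ge (G := G) (C := P) (i := fringe j) hjP
      (((q:ℚ)*q - q) / ((q:ℚ)+1)) ?_
    · rwa [hg.card_eq] at hmain
    · rw [hDΓcard, hDΓ]
      have hne : ((q:ℚ)+1) ≠ 0 := by positivity
      have : (q:ℚ)+1 = ((q+1 : ℕ) : ℚ) := by push_cast; ring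
      rw [this, div_mul_cancel₀ _ (by exact_mod_cast hne)]
      have hsum0 : (q * (q - 1) : ℕ) ≤ ∑ z ∈ Bs, (friendsIn G P z).card := by
        have hthis := hg.sum_friends_base_ge (G := G)
        rw [← hBs, ← hqdef] at hthis
        omega
      have hsum1 : ∑ z ∈ Bs, ((friendsIn G P z).card : ℚ)
          ≤ ∑ z ∈ insert (mid j) Bs, ((friendsIn G P z).card : ℚ) := by
        rw [Finset.sum_insert hmidnb]
        have : (0:ℚ) ≤ ((friendsIn G P (mid j)).card : ℚ) := by positivity
        linarith
      calc (q:ℚ)*q - q = ((q * (q - 1) : ℕ) : ℚ) := by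
            push_cast [Nat.cast_sub hq1]
            ring
        _ ≤ ∑ z ∈ Bs, ((friendsIn G P z).card : ℚ) := by
            rw [← Nat.cast_sum]
            exact_mod_cast hsum0
        _ ≤ _ := hsum1
  have hblock := hC.2 (fringe j) hjC
  rw [hpart _ hjP] at hblock
  have hCz1 : (1:ℚ) ≤ (C.card:ℚ) := by
    have : 1 ≤ C.card := Finset.card_pos.2 ⟨fringe j, hjC⟩
    exact_mod_cast this
  exact arith2 k k' q d (Fintype.card N) (C.card:ℚ) hk hk' hd1 hdk hq hn hCz1
    (lt_of_le_of_lt hΓlow (lt_of_lt_of_le hblock hCup))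

/-- Claim 3: no mid player of a gadget whose top has few friends belongs to a
blocking coalition. -/
lemma mid_not_mem
    (hk : 4 ≤ k) (hk' : k' = avgK' k) (hd1 : 1 ≤ d) (hdk : d + 1 ≤ k)
    (hn : k' * k ^ 2 ≤ Fintype.card N)
    (hloc : ∀ y ∈ P, y ≠ top → ∀ z, G.Adj y z → z ∈ P)
    (hpart : ∀ y ∈ P, Γ.part y = P)
    (hC : Blocks (utilAvgEQ G) Γ C)
    (hw : w ∈ C) (hwtop : w ∉ P ∨ w = top)
    (hf4 : (friendsIn G C top).card ≤ 4)
    (i : Fin d) : mid i ∉ C := by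
  intro hiC
  set Bs := domeBase P top mid with hBs
  set q := Bs.card with hqdef
  have hq : q + (d + 1) = k' := hg.base_card
  have hib : fringe i ∈ Bs := hg.fringe_mem i
  have hq1 : 1 ≤ q := Finset.card_pos.2 ⟨fringe i, hib⟩
  have hiP : mid i ∈ P := hg.mid_mem i
  have hitop : mid i ≠ top := hg.mid_ne_top i
  have hlocm : ∀ u, u ∈ C → G.Adj (mid i) u → u ∈ P :=
    fun u hu hadj => hloc _ hiP hitop u hadj
  -- C-side upper bound with M = 4
  have hCup : utilAvgEQ G C (mid i)
      ≤ ((Fintype.card N : ℚ) + 1) * 4 - ((C.card:ℚ) - 1) := by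
    apply utilAvgEQ_le hiC
    intro c hc
    rcases Finset.mem_insert.1 hc with rfl | hc
    · have : (friendsIn G C (mid i)).card ≤ 2 := by
        rw [hg.friendsIn_mid hlocm]
        calc (({top} ∩ C) ∪ ({fringe i} ∩ C)).card
            ≤ ({top} ∩ C).card + ({fringe i} ∩ C).card := Finset.card_union_le _ _
          _ ≤ 1 + 1 := Nat.add_le_add
              (le_trans (Finset.card_le_card Finset.inter_subset_left) (by simp))
              (le_trans (Finset.card_le_card Finset.inter_subset_left) (by simp))
      calc ((friendsIn G C (mid i)).card : ℚ) ≤ (2:ℚ) := by exact_mod_cast this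
        _ ≤ 4 := by norm_num
    · rw [hg.friendsIn_mid hlocm] at hc
      rcases Finset.mem_union.1 hc with hc | hc
      · obtain ⟨hc1, -⟩ := Finset.mem_inter.1 hc
        rw [Finset.mem_singleton.1 hc1]
        exact_mod_cast hf4
      · obtain ⟨hc1, hc2⟩ := Finset.mem_inter.1 hc
        rw [Finset.mem_singleton.1 hc1] at hc2
        exact absurd hc2 (hg.fringe_not_mem hk hk' hd1 hdk hn hloc hpart hC hw hwtop i)
  -- Γ-side lower bound
  have hfrP : friendsIn G P (mid i) = {top, fringe i} := by
    rw [hg.friendsIn_mid (fun z hz _ => hz),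
      Finset.inter_eq_left.2 (by simp [hg.top_mem] : {top} ⊆ P),
      Finset.inter_eq_left.2 (by simp [hg.fringe_mem_P i] : {fringe i} ⊆ P)]
    rfl
  have hDΓ : insert (mid i) (friendsIn G P (mid i)) = {mid i, top, fringe i} := by
    rw [hfrP]
  have hne1 : mid i ≠ top := hitop
  have hne2 : mid i ≠ fringe i := (hg.fringe_ne_mid i i).symm
  have hne3 : top ≠ fringe i := (hg.fringe_ne_top i).symm
  have hDΓcard : (insert (mid i) (friendsIn G P (mid i))).card = 3 := by
    rw [hDΓ]
    rw [Finset.card_insert_of_notMem (by simp [hne1, hne2]),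
      Finset.card_insert_of_notMem (by simp [hne3]), Finset.card_singleton]
  have hfrfr : (friendsIn G P (fringe i)).card = q := by
    have hfr : friendsIn G P (fringe i) = ((Bs ∩ P).erase (fringe i)) ∪ ({mid i} ∩ P) :=
      hg.friendsIn_fringe (fun z hz _ => hz)
    rw [hfr, Finset.inter_eq_left.2 hg.base_subset,
      Finset.inter_eq_left.2 (by simp [hg.mid_mem i] : {mid i} ⊆ P)]
    rw [Finset.card_union_of_disjoint, Finset.card_erase_of_mem hib, Finset.card_singleton]
    · omega
    · rw [Finset.disjoint_right]
      intro u hu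
      rw [Finset.mem_singleton.1 hu]
      intro hmem
      exact hg.mid_not_mem_base i (Finset.erase_subset _ _ hmem)
  have hΓlow : ((Fintype.card N : ℚ) + 1) * ((q:ℚ)/3) - ((k':ℚ) - 1)
      ≤ utilAvgEQ G P (mid i) := by
    have hmain := utilAvgEQ_ge (G := G) (C := P) (i := mid i) hiP ((q:ℚ)/3) ?_
    · rwa [hg.card_eq] at hmain
    · rw [hDΓcard, hDΓ]
      have hfim : fringe i ∈ ({mid i, top, fringe i} : Finset N) := by simp
      have hsingle : ((friendsIn G P (fringe i)).card : ℚ)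
          ≤ ∑ z ∈ ({mid i, top, fringe i} : Finset N), ((friendsIn G P z).card : ℚ) :=
        Finset.single_le_sum (f := fun z => ((friendsIn G P z).card : ℚ))
          (fun z _ => by positivity) hfim
      rw [hfrfr] at hsingle
      calc ((q:ℚ)/3) * 3 = (q:ℚ) := by ring
        _ ≤ _ := hsingle
  have hblock := hC.2 (mid i) hiC
  rw [hpart _ hiP] at hblock
  have hCz1 : (1:ℚ) ≤ (C.card:ℚ) := by
    have : 1 ≤ C.card := Finset.card_pos.2 ⟨mid i, hiC⟩
    exact_mod_cast this
  exact arith3 k k' q d (Fintype.card N) (C.card:ℚ) hk hk' hd1 hdk hq hn hCz1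
    (lt_of_le_of_lt hΓlow (lt_of_lt_of_le hblock hCup))

end IsDomeGadget
end Claims2
section Reduction
variable {V : Type*} [Fintype V] [DecidableEq V] {N : Type*} [Fintype N] [DecidableEq N]
  {H : SimpleGraph V} {k : ℕ} {G : SimpleGraph N}
  {Pv : V → Finset N} {Pe : Sym2 V → Finset N} {Pve : V → Sym2 V → Finset N}
  {vp : V → N} {ep : Sym2 V → N} {bp : V → Sym2 V → N}

namespace AvgEQReduction
variable (R : AvgEQReduction H k G Pv Pe Pve vp ep bp)
include R

lemma vp_mem (w : V) : vp w ∈ Pv w := by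
  obtain ⟨m, f, hg⟩ := R.dome_v w
  exact hg.top_mem

lemma ep_mem {e : Sym2 V} (he : e ∈ H.edgeSet) : ep e ∈ Pe e := by
  obtain ⟨m, f, hg⟩ := R.dome_e e he
  exact hg.top_mem

lemma bp_mem {w : V} {f : Sym2 V} (hf : f ∈ H.edgeSet) (hwf : w ∈ f) : bp w f ∈ Pve w f := by
  obtain ⟨m, fr, hg⟩ := R.dome_ve w f hf hwf
  exact hg.top_mem

lemma pv_eq {x : N} {a b : V} (ha : x ∈ Pv a) (hb : x ∈ Pv b) : a = b := by
  by_contra hne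
  exact Finset.disjoint_left.1 (R.disj_vv a b hne) ha hb

lemma pv_pe {x : N} {a : V} {e : Sym2 V} (he : e ∈ H.edgeSet)
    (ha : x ∈ Pv a) (hb : x ∈ Pe e) : False :=
  Finset.disjoint_left.1 (R.disj_v_e a e he) ha hb

lemma pv_pve {x : N} {a w : V} {f : Sym2 V} (hf : f ∈ H.edgeSet) (hwf : w ∈ f)
    (ha : x ∈ Pv a) (hb : x ∈ Pve w f) : False :=
  Finset.disjoint_left.1 (R.disj_v_b a w f hf hwf) ha hb

lemma pe_eq {x : N} {e f : Sym2 V} (he : e ∈ H.edgeSet) (hf : f ∈ H.edgeSet)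
    (ha : x ∈ Pe e) (hb : x ∈ Pe f) : e = f := by
  by_contra hne
  exact Finset.disjoint_left.1 (R.disj_ee e he f hf hne) ha hb

lemma pe_pve {x : N} {e : Sym2 V} {w : V} {f : Sym2 V} (he : e ∈ H.edgeSet)
    (hf : f ∈ H.edgeSet) (hwf : w ∈ f) (ha : x ∈ Pe e) (hb : x ∈ Pve w f) : False :=
  Finset.disjoint_left.1 (R.disj_e_b e he w f hf hwf) ha hb

lemma pve_eq {x : N} {a w : V} {e f : Sym2 V} (he : e ∈ H.edgeSet) (hae : a ∈ e)
    (hf : f ∈ H.edgeSet) (hwf : w ∈ f) (ha : x ∈ Pve a e) (hb : x ∈ Pve w f) :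
    a = w ∧ e = f := by
  by_contra hne
  have : (a, e) ≠ (w, f) := by
    intro hcontra
    obtain ⟨h1, h2⟩ := Prod.mk.injEq .. ▸ hcontra
    exact hne ⟨h1, h2⟩
  exact Finset.disjoint_left.1 (R.disj_bb a e he hae w f hf hwf this) ha hb

/-- Friends of a non-top player of a vertex gadget stay inside the gadget. -/
lemma loc_pv (v : V) : ∀ y ∈ Pv v, y ≠ vp v → ∀ z, G.Adj y z → z ∈ Pv v := by
  intro y hy hyne z hadj
  rcases R.adj_cases y z hadj with ⟨a, h1, h2⟩ | ⟨e, he, h1, h2⟩ | ⟨a, e, he, hae, h1, h2⟩ |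
    ⟨a, e, he, hae, ⟨h1, h2⟩ | ⟨h1, h2⟩⟩ | ⟨a, e, he, hae, ⟨h1, h2⟩ | ⟨h1, h2⟩⟩
  · rwa [R.pv_eq h1 hy] at h2
  · exact absurd h1 (fun h => R.pv_pe he hy h)
  · exact absurd h1 (fun h => R.pv_pve he hae hy h)
  · exact absurd (h1 ▸ hy) (fun h => R.pv_pve he hae h (R.bp_mem he hae))
  · have : a = v := R.pv_eq (h2 ▸ R.vp_mem a) hy
    exact absurd (this ▸ h2) hyne
  · exact absurd (h1 ▸ hy) (fun h => R.pv_pve he hae h (R.bp_mem he hae))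
  · exact absurd (h2 ▸ hy) (fun h => R.pv_pe he h (R.ep_mem he))

/-- Friends of a non-top player of an incidence gadget stay inside the gadget. -/
lemma loc_pve (v : V) (e : Sym2 V) (he : e ∈ H.edgeSet) (hve : v ∈ e) :
    ∀ y ∈ Pve v e, y ≠ bp v e → ∀ z, G.Adj y z → z ∈ Pve v e := by
  intro y hy hyne z hadj
  rcases R.adj_cases y z hadj with ⟨a, h1, h2⟩ | ⟨f, hf, h1, h2⟩ | ⟨a, f, hf, haf, h1, h2⟩ |
    ⟨a, f, hf, haf, ⟨h1, h2⟩ | ⟨h1, h2⟩⟩ | ⟨a, f, hf, haf, ⟨h1, h2⟩ | ⟨h1, h2⟩⟩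
  · exact absurd h2 (fun h => R.pv_pve he hve h1 hy)
  · exact absurd h1 (fun h => R.pe_pve hf he hve h hy)
  · obtain ⟨ha, hf'⟩ := R.pve_eq hf haf he hve h1 hy
    rwa [ha, hf'] at h2
  · obtain ⟨ha, hf'⟩ := R.pve_eq hf haf he hve (h1 ▸ R.bp_mem hf haf) hy
    exact absurd (by rw [h1, ha, hf']) hyne
  · exact absurd hy (fun h => R.pv_pve he hve (h2.symm ▸ R.vp_mem a) h)
  · obtain ⟨ha, hf'⟩ := R.pve_eq hf haf he hve (h1 ▸ R.bp_mem hf haf) hy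
    exact absurd (by rw [h1, ha, hf']) hyne
  · exact absurd hy (fun h => R.pe_pve hf he hve (h2 ▸ R.ep_mem hf) h)

/-- Characterisation of the friends of a vertex player. -/
lemma adj_vp_cases {v : V} {z : N} {midv : Fin (k-1) → N} {frv : Fin (k-1) → N}
    (hgv : IsDomeGadget G (k-1) (avgK' k) (Pv v) (vp v) midv frv)
    (hadj : G.Adj (vp v) z) :
    (∃ i, z = midv i) ∨ (∃ e, e ∈ H.edgeSet ∧ v ∈ e ∧ z = bp v e) := by
  rcases R.adj_cases (vp v) z hadj with ⟨a, h1, h2⟩ | ⟨f, hf, h1, h2⟩ | ⟨a, f, hf, haf, h1, h2⟩ |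
    ⟨a, f, hf, haf, ⟨h1, h2⟩ | ⟨h1, h2⟩⟩ | ⟨a, f, hf, haf, ⟨h1, h2⟩ | ⟨h1, h2⟩⟩
  · have : a = v := R.pv_eq h1 (R.vp_mem v)
    subst this
    exact Or.inl (hgv.adj_of_top h2 hadj)
  · exact absurd h1 (fun h => R.pv_pe hf (R.vp_mem v) h)
  · exact absurd h1 (fun h => R.pv_pve hf haf (R.vp_mem v) h)
  · exact absurd (h1 ▸ R.vp_mem v) (fun h => R.pv_pve hf haf h (R.bp_mem hf haf))
  · have : a = v := R.pv_eq (h2 ▸ R.vp_mem a) (R.vp_mem v)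
    subst this
    exact Or.inr ⟨f, hf, haf, h1⟩
  · exact absurd (h1 ▸ R.vp_mem v) (fun h => R.pv_pve hf haf h (R.bp_mem hf haf))
  · exact absurd (h2 ▸ R.vp_mem v) (fun h => R.pv_pe hf h (R.ep_mem hf))

/-- Characterisation of the friends of an incidence player. -/
lemma adj_bp_cases {v : V} {e : Sym2 V} (he : e ∈ H.edgeSet) (hve : v ∈ e)
    {z : N} {mid2 : Fin 2 → N} {fr2 : Fin 2 → N}
    (hg2 : IsDomeGadget G 2 (avgK' k) (Pve v e) (bp v e) mid2 fr2)
    (hadj : G.Adj (bp v e) z) :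
    z = vp v ∨ z = ep e ∨ ∃ i, z = mid2 i := by
  rcases R.adj_cases (bp v e) z hadj with ⟨a, h1, h2⟩ | ⟨f, hf, h1, h2⟩ |
    ⟨a, f, hf, haf, h1, h2⟩ |
    ⟨a, f, hf, haf, ⟨h1, h2⟩ | ⟨h1, h2⟩⟩ | ⟨a, f, hf, haf, ⟨h1, h2⟩ | ⟨h1, h2⟩⟩
  · exact absurd h1 (fun h => R.pv_pve he hve h (R.bp_mem he hve))
  · exact absurd h1 (fun h => R.pe_pve hf he hve h (R.bp_mem he hve))
  · obtain ⟨ha, hf'⟩ := R.pve_eq hf haf he hve h1 (R.bp_mem he hve)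
    subst ha; subst hf'
    exact Or.inr (Or.inr (hg2.adj_of_top h2 hadj))
  · obtain ⟨ha, hf'⟩ := R.pve_eq hf haf he hve (h1 ▸ R.bp_mem hf haf) (R.bp_mem he hve)
    subst ha; subst hf'
    exact Or.inl h2
  · refine absurd (R.vp_mem a) (fun h => ?_)
    rw [← h2] at h
    exact R.pv_pve he hve h (R.bp_mem he hve)
  · obtain ⟨ha, hf'⟩ := R.pve_eq hf haf he hve (h1 ▸ R.bp_mem hf haf) (R.bp_mem he hve)
    subst ha; subst hf'
    exact Or.inr (Or.inl h2)
  · exact absurd (h2 ▸ R.bp_mem he hve) (fun h => R.pe_pve hf he hve (R.ep_mem hf) h)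

/-- The number of players is at least `k' · k²`. -/
lemma card_ge (hsize : k ^ 2 ≤ Fintype.card V + H.edgeFinset.card) :
    avgK' k * k ^ 2 ≤ Fintype.card N := by
  classical
  set U := (Finset.univ : Finset V).biUnion Pv ∪ H.edgeFinset.biUnion Pe with hU
  have hcard1 : ((Finset.univ : Finset V).biUnion Pv).card = Fintype.card V * avgK' k := by
    rw [Finset.card_biUnion (fun x _ y _ hxy => R.disj_vv x y hxy)]
    have : ∀ w ∈ (Finset.univ : Finset V), (Pv w).card = avgK' k := by
      intro w _
      obtain ⟨m, f, hg⟩ := R.dome_v w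
      exact hg.card_eq
    rw [Finset.sum_congr rfl this, Finset.sum_const, smul_eq_mul, Finset.card_univ]
  have hcard2 : (H.edgeFinset.biUnion Pe).card = H.edgeFinset.card * avgK' k := by
    rw [Finset.card_biUnion (fun x hx y hy hxy => R.disj_ee x
      (SimpleGraph.mem_edgeFinset.1 hx) y (SimpleGraph.mem_edgeFinset.1 hy) hxy)]
    have : ∀ e ∈ H.edgeFinset, (Pe e).card = avgK' k := by
      intro e he
      obtain ⟨m, f, hg⟩ := R.dome_e e (SimpleGraph.mem_edgeFinset.1 he)
      exact hg.card_eq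
    rw [Finset.sum_congr rfl this, Finset.sum_const, smul_eq_mul]
  have hdisj : Disjoint ((Finset.univ : Finset V).biUnion Pv) (H.edgeFinset.biUnion Pe) := by
    rw [Finset.disjoint_left]
    intro x hx hx'
    obtain ⟨a, -, ha⟩ := Finset.mem_biUnion.1 hx
    obtain ⟨e, he, he'⟩ := Finset.mem_biUnion.1 hx'
    exact R.pv_pe (SimpleGraph.mem_edgeFinset.1 he) ha he'
  have hUcard : U.card = (Fintype.card V + H.edgeFinset.card) * avgK' k := by
    rw [hU, Finset.card_union_of_disjoint hdisj, hcard1, hcard2, Nat.add_mul]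
  calc avgK' k * k ^ 2 ≤ avgK' k * (Fintype.card V + H.edgeFinset.card) :=
        Nat.mul_le_mul_left _ hsize
    _ = U.card := by rw [hUcard, Nat.mul_comm]
    _ ≤ Fintype.card N := Finset.card_le_univ U

end AvgEQReduction
end Reduction
section Final
lemma arith_final (k k' n m b s1 Csz : ℕ) (S : ℚ)
    (hk : 4 ≤ k) (hk' : k' = avgK' k) (hn : k' * k ^ 2 ≤ n)
    (hs1b : s1 ≤ b) (hs1k : s1 + 1 ≤ k - 1) (hCsz : 1 ≤ Csz)
    (hS : S ≤ 2*(m:ℚ) + 2*b + s1)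
    (hblock : ((n:ℚ)+1) * ((3*((k:ℚ)-1))/k) - ((k':ℚ)-1)
      < ((n:ℚ)+1) * (S / ((1:ℚ)+m+b)) - ((Csz:ℚ)-1)) : False := by
  have hkk := avgK'_facts hk hk'
  have hkq : (4:ℚ) ≤ k := by exact_mod_cast hk
  have hnq : ((k':ℚ)) * k^2 ≤ n := by exact_mod_cast hn
  have hs1bq : (s1:ℚ) ≤ b := by exact_mod_cast hs1b
  have hs1kq : (s1:ℚ) + 2 ≤ k := by
    have h1 : s1 + 2 ≤ k := by omega
    exact_mod_cast h1
  have hCszq : (1:ℚ) ≤ Csz := by exact_mod_cast hCsz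
  have hm0 : (0:ℚ) ≤ m := by positivity
  have hb0 : (0:ℚ) ≤ b := by positivity
  have hs10 : (0:ℚ) ≤ s1 := by positivity
  have hk0 : (0:ℚ) < k := by linarith
  have ht0 : (0:ℚ) < (1:ℚ)+m+b := by linarith
  have hk'pos : (0:ℚ) < k' := by nlinarith
  set K := (k:ℚ) with hK
  set t := (1:ℚ)+m+b with ht
  -- step 1 : S / t ≤ (3K²-3K-1)/K²
  have hstep1 : S / t ≤ (3*K*K - 3*K - 1)/(K*K) := by
    rw [div_le_div_iff₀ ht0 (by positivity)]
    have hh1 : S * (K*K) ≤ (2*t + s1 - 2) * (K*K) := by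
      apply mul_le_mul_of_nonneg_right _ (by positivity)
      rw [ht]; linarith
    have hh2 : (0:ℚ) ≤ (t - ((s1:ℚ)+1)) * (K*K - 3*K - 1) := by
      apply mul_nonneg
      · rw [ht]; linarith
      · nlinarith
    have hh3 : (0:ℚ) ≤ (K - 2 - s1) * (3*K + 1) := by
      apply mul_nonneg <;> nlinarith
    nlinarith [hh1, hh2, hh3]
  have hstep1' : ((n:ℚ)+1) * (S / t) ≤ ((n:ℚ)+1) * ((3*K*K - 3*K - 1)/(K*K)) :=
    mul_le_mul_of_nonneg_left hstep1 (by positivity)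
  have hdiff : 3*(K-1)/K - (3*K*K - 3*K - 1)/(K*K) = 1/(K*K) := by
    field_simp
    ring
  have hfin : ((n:ℚ)+1) * (1/(K*K)) < (k':ℚ) - 1 := by
    have h2 : ((n:ℚ)+1) * (3*(K-1)/K) - ((n:ℚ)+1) * ((3*K*K - 3*K - 1)/(K*K))
        < ((k':ℚ)-1) - ((Csz:ℚ)-1) := by linarith
    have h3 : ((n:ℚ)+1) * (3*(K-1)/K) - ((n:ℚ)+1) * ((3*K*K - 3*K - 1)/(K*K))
        = ((n:ℚ)+1) * (1/(K*K)) := by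
      rw [← mul_sub, hdiff]
    linarith
  have h4 : ((n:ℚ)+1) * (1/(K*K)) * (K*K) < ((k':ℚ) - 1) * (K*K) :=
    mul_lt_mul_of_pos_right hfin (by positivity)
  have h5 : ((n:ℚ)+1) * (1/(K*K)) * (K*K) = (n:ℚ)+1 := by
    field_simp
  rw [h5] at h4
  -- but n + 1 ≥ k'·K² + 1 > (k'-1)·K²
  have h6 : (k':ℚ) * (K*K) ≤ n := by
    calc (k':ℚ) * (K*K) = (k':ℚ) * K^2 := by ring
      _ ≤ n := hnq
  nlinarith [h4, h6]
end Final

/-- In the avg-EQ reduction instance, if a coalition `C` blocks `Γ` and a vertex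
player `vp v` belongs to `C`, then at least `k − 1` edges of `H` incident to `v`
have their edge player in `C`. -/
theorem avgEQ_vertex_player_degree {V N : Type*} [Fintype V] [DecidableEq V]
    [Fintype N] [DecidableEq N]
    (H : SimpleGraph V) (k : ℕ) (hk : 4 ≤ k)
    (hsize : k ^ 2 ≤ Fintype.card V + H.edgeFinset.card)
    (G : SimpleGraph N) (Pv : V → Finset N) (Pe : Sym2 V → Finset N)
    (Pve : V → Sym2 V → Finset N)
    (vp : V → N) (ep : Sym2 V → N) (bp : V → Sym2 V → N)
    (R : AvgEQReduction H k G Pv Pe Pve vp ep bp)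
    (Γ : CoalitionStructure N) (hΓ : IsAvgGamma H Pv Pe Pve Γ)
    (C : Finset N) (hC : Blocks (utilAvgEQ G) Γ C)
    (v : V) (hv : vp v ∈ C) :
    k - 1 ≤ (H.edgeFinset.filter (fun e => v ∈ e ∧ ep e ∈ C)).card := by
  classical
  by_contra hgoal
  push_neg at hgoal
  have hn : avgK' k * k ^ 2 ≤ Fintype.card N := R.card_ge hsize
  obtain ⟨midv, frv, hgv⟩ := R.dome_v v
  have hd1v : 1 ≤ k - 1 := by omega
  have hdkv : (k - 1) + 1 ≤ k := by omega
  have hlocv := R.loc_pv v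
  have hpartv : ∀ y ∈ Pv v, Γ.part y = Pv v := fun y hy => hΓ.1 v y hy
  have hwtopv : vp v ∉ Pv v ∨ vp v = vp v := Or.inr rfl
  have hfrv_not : ∀ j, frv j ∉ C :=
    hgv.fringe_not_mem hk rfl hd1v hdkv hn hlocv hpartv hC hv hwtopv
  -- the relevant sets
  set Es' := H.edgeFinset.filter (fun e => v ∈ e ∧ bp v e ∈ C) with hEs'
  set M := (Finset.univ.image midv) ∩ C with hM
  set b := Es'.card with hb
  set m := M.card with hm
  have hEs'mem : ∀ e ∈ Es', e ∈ H.edgeSet ∧ v ∈ e ∧ bp v e ∈ C := by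
    intro e he
    obtain ⟨h1, h2, h3⟩ := Finset.mem_filter.1 he
    exact ⟨SimpleGraph.mem_edgeFinset.1 h1, h2, h3⟩
  have hbp_inj : ∀ e ∈ Es', ∀ f ∈ Es', bp v e = bp v f → e = f := by
    intro e he f hf heq
    obtain ⟨he1, he2, -⟩ := hEs'mem e he
    obtain ⟨hf1, hf2, -⟩ := hEs'mem f hf
    have h1 : bp v e ∈ Pve v e := R.bp_mem he1 he2
    have h2 : bp v e ∈ Pve v f := heq ▸ R.bp_mem hf1 hf2
    exact (R.pve_eq he1 he2 hf1 hf2 h1 h2).2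
  set B2 := Es'.image (bp v) with hB2
  have hB2card : B2.card = b := Finset.card_image_of_injOn hbp_inj
  have hB2mem : ∀ z ∈ B2, ∃ e, (e ∈ H.edgeSet ∧ v ∈ e ∧ bp v e ∈ C) ∧ z = bp v e := by
    intro z hz
    obtain ⟨e, he, rfl⟩ := Finset.mem_image.1 hz
    exact ⟨e, hEs'mem e he, rfl⟩
  -- friend-count bound for incidence players
  have hbp_fr : ∀ e ∈ Es', (friendsIn G C (bp v e)).card
      ≤ 1 + (if ep e ∈ C then 1 else 0) := by
    intro e heEs
    obtain ⟨heS, hve, hbpC⟩ := hEs'mem e heEs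
    obtain ⟨mid2, fr2, hg2⟩ := R.dome_ve v e heS hve
    have hloc2 := R.loc_pve v e heS hve
    have hpart2 : ∀ y ∈ Pve v e, Γ.part y = Pve v e := fun y hy => hΓ.2.2 v e heS hve y hy
    have hw2 : vp v ∉ Pve v e ∨ vp v = bp v e :=
      Or.inl (fun h => R.pv_pve heS hve (R.vp_mem v) h)
    have hf4 : (friendsIn G C (bp v e)).card ≤ 4 := by
      have hsub : friendsIn G C (bp v e)
          ⊆ insert (vp v) (insert (ep e) (Finset.univ.image mid2)) := by
        intro z hz
        obtain ⟨hzC, hadj⟩ := mem_friendsIn.1 hz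
        rcases R.adj_bp_cases heS hve hg2 hadj with rfl | rfl | ⟨i, rfl⟩
        · exact Finset.mem_insert_self _ _
        · exact Finset.mem_insert_of_mem (Finset.mem_insert_self _ _)
        · exact Finset.mem_insert_of_mem (Finset.mem_insert_of_mem
            (Finset.mem_image.2 ⟨i, Finset.mem_univ i, rfl⟩))
      calc (friendsIn G C (bp v e)).card
          ≤ (insert (vp v) (insert (ep e) (Finset.univ.image mid2))).card :=
            Finset.card_le_card hsub
        _ ≤ (insert (ep e) (Finset.univ.image mid2)).card + 1 := Finset.card_insert_le _ _
        _ ≤ ((Finset.univ.image mid2).card + 1) + 1 :=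
            Nat.add_le_add_right (Finset.card_insert_le _ _) 1
        _ ≤ (2 + 1) + 1 := by
            have : (Finset.univ.image mid2).card ≤ 2 := by
              calc (Finset.univ.image mid2).card ≤ (Finset.univ : Finset (Fin 2)).card :=
                    Finset.card_image_le
                _ = 2 := by simp
            omega
        _ = 4 := by norm_num
    have hmid2 : ∀ i, mid2 i ∉ C := fun i =>
      hg2.mid_not_mem hk rfl (by norm_num) (by omega) hn hloc2 hpart2 hC hv hw2 hf4 i
    have hsub2 : friendsIn G C (bp v e) ⊆ insert (vp v) ({ep e} ∩ C) := by
      intro z hz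
      obtain ⟨hzC, hadj⟩ := mem_friendsIn.1 hz
      rcases R.adj_bp_cases heS hve hg2 hadj with rfl | rfl | ⟨i, rfl⟩
      · exact Finset.mem_insert_self _ _
      · exact Finset.mem_insert_of_mem (Finset.mem_inter.2 ⟨Finset.mem_singleton_self _, hzC⟩)
      · exact absurd hzC (hmid2 i)
    calc (friendsIn G C (bp v e)).card ≤ (insert (vp v) ({ep e} ∩ C)).card :=
          Finset.card_le_card hsub2
      _ ≤ ({ep e} ∩ C).card + 1 := Finset.card_insert_le _ _
      _ ≤ (if ep e ∈ C then 1 else 0) + 1 := by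
          by_cases h : ep e ∈ C
          · have : ({ep e} ∩ C) = {ep e} := Finset.inter_eq_left.2 (by simp [h])
            rw [this, if_pos h, Finset.card_singleton]
          · have : ({ep e} ∩ C) = ∅ := by
              rw [Finset.eq_empty_iff_forall_notMem]
              intro u hu
              obtain ⟨h1, h2⟩ := Finset.mem_inter.1 hu
              exact h ((Finset.mem_singleton.1 h1) ▸ h2)
            rw [this, if_neg h, Finset.card_empty]
      _ = 1 + (if ep e ∈ C then 1 else 0) := by omega
  -- friend-count bound for mid players of the vertex gadget
  have hmid_fr : ∀ i, midv i ∈ C → (friendsIn G C (midv i)).card ≤ 1 := by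
    intro i hiC
    have hlocm : ∀ u, u ∈ C → G.Adj (midv i) u → u ∈ Pv v :=
      fun u hu hadj => hlocv (midv i) (hgv.mid_mem i) (hgv.mid_ne_top i) u hadj
    rw [hgv.friendsIn_mid hlocm]
    have hempty : ({frv i} ∩ C) = ∅ := by
      rw [Finset.eq_empty_iff_forall_notMem]
      intro u hu
      obtain ⟨h1, h2⟩ := Finset.mem_inter.1 hu
      exact hfrv_not i ((Finset.mem_singleton.1 h1) ▸ h2)
    rw [hempty, Finset.union_empty]
    exact le_trans (Finset.card_le_card Finset.inter_subset_left) (by simp)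
  -- the friends of the vertex player in C
  have hfr_vp : friendsIn G C (vp v) = M ∪ B2 := by
    ext z
    rw [mem_friendsIn]
    constructor
    · rintro ⟨hzC, hadj⟩
      rcases R.adj_vp_cases hgv hadj with ⟨i, rfl⟩ | ⟨e, heS, hve, rfl⟩
      · exact Finset.mem_union_left _ (Finset.mem_inter.2
          ⟨Finset.mem_image.2 ⟨i, Finset.mem_univ i, rfl⟩, hzC⟩)
      · refine Finset.mem_union_right _ (Finset.mem_image.2 ⟨e, ?_, rfl⟩)
        exact Finset.mem_filter.2 ⟨SimpleGraph.mem_edgeFinset.2 heS, hve, hzC⟩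
    · intro hz
      rcases Finset.mem_union.1 hz with hz | hz
      · obtain ⟨hzi, hzC⟩ := Finset.mem_inter.1 hz
        obtain ⟨i, -, rfl⟩ := Finset.mem_image.1 hzi
        exact ⟨hzC, hgv.adj_top_mid i⟩
      · obtain ⟨e, heEs, rfl⟩ := Finset.mem_image.1 hz
        obtain ⟨h1, h2, h3⟩ := hEs'mem e heEs
        exact ⟨h3, (R.adj_bv v e h1 h2).symm⟩
  have hdisjMB : Disjoint M B2 := by
    rw [Finset.disjoint_left]
    intro x hxM hxB
    obtain ⟨hxi, -⟩ := Finset.mem_inter.1 hxM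
    obtain ⟨i, -, rfl⟩ := Finset.mem_image.1 hxi
    obtain ⟨e, ⟨he1, he2, -⟩, heq⟩ := hB2mem _ hxB
    exact R.pv_pve he1 he2 (hgv.mid_mem i) (heq ▸ R.bp_mem he1 he2)
  have hvp_notMB : vp v ∉ M ∪ B2 := by
    intro h
    rcases Finset.mem_union.1 h with h | h
    · obtain ⟨hxi, -⟩ := Finset.mem_inter.1 h
      obtain ⟨i, -, hi⟩ := Finset.mem_image.1 hxi
      exact hgv.mid_ne_top i hi
    · obtain ⟨e, ⟨he1, he2, -⟩, heq⟩ := hB2mem _ h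
      exact R.pv_pve he1 he2 (R.vp_mem v) (heq ▸ R.bp_mem he1 he2)
  have hfvp : (friendsIn G C (vp v)).card = m + b := by
    rw [hfr_vp, Finset.card_union_of_disjoint hdisjMB, hB2card]
  have hDcard : (insert (vp v) (friendsIn G C (vp v))).card = m + b + 1 := by
    rw [hfr_vp, Finset.card_insert_of_notMem hvp_notMB,
      Finset.card_union_of_disjoint hdisjMB, hB2card]
  -- sum bounds on the C side
  set s1 := (Es'.filter (fun e => ep e ∈ C)).card with hs1def
  have hsumB2 : ∑ z ∈ B2, (friendsIn G C z).card ≤ b + s1 := by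
    rw [hB2, Finset.sum_image hbp_inj]
    calc ∑ e ∈ Es', (friendsIn G C (bp v e)).card
        ≤ ∑ e ∈ Es', (1 + if ep e ∈ C then 1 else 0) := Finset.sum_le_sum hbp_fr
      _ = b + s1 := by
          have h1 : (∑ _x ∈ Es', 1) = b := by rw [Finset.sum_const, smul_eq_mul, mul_one]
          have h2 : (∑ x ∈ Es', if ep x ∈ C then 1 else 0) = s1 :=
            (Finset.card_filter _ _).symm
          rw [Finset.sum_add_distrib, h1, h2]
  have hsumM : ∑ z ∈ M, (friendsIn G C z).card ≤ m := by
    calc ∑ z ∈ M, (friendsIn G C z).card ≤ ∑ _z ∈ M, 1 := by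
          apply Finset.sum_le_sum
          intro z hz
          obtain ⟨hzi, hzC⟩ := Finset.mem_inter.1 hz
          obtain ⟨i, -, rfl⟩ := Finset.mem_image.1 hzi
          exact hmid_fr i hzC
      _ = m := by rw [Finset.sum_const, smul_eq_mul, mul_one]
  have hsumTot : ∑ c ∈ insert (vp v) (friendsIn G C (vp v)), (friendsIn G C c).card
      ≤ (m + b) + (m + (b + s1)) := by
    rw [hfr_vp, Finset.sum_insert hvp_notMB, Finset.sum_union hdisjMB]
    have hfvp' : (friendsIn G C (vp v)).card = m + b := hfvp
    exact add_le_add (le_of_eq hfvp') (add_le_add hsumM hsumB2)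
  -- Γ-side computation
  have himsub : Finset.univ.image midv ⊆ Pv v := by
    intro z hz
    obtain ⟨i, -, rfl⟩ := Finset.mem_image.1 hz
    exact hgv.mid_mem i
  have hfrΓ : friendsIn G (Pv v) (vp v) = Finset.univ.image midv := by
    rw [hgv.friendsIn_top (Finset.Subset.refl _), Finset.inter_eq_left.2 himsub]
  have hvp_notim : vp v ∉ Finset.univ.image midv := by
    intro h
    obtain ⟨i, -, hi⟩ := Finset.mem_image.1 h
    exact hgv.mid_ne_top i hi
  have him_card : (Finset.univ.image midv).card = k - 1 := by
    rw [Finset.card_image_of_injective _ hgv.mid_inj, Finset.card_univ, Fintype.card_fin]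
  have hDΓcard : (insert (vp v) (friendsIn G (Pv v) (vp v))).card = k := by
    rw [hfrΓ, Finset.card_insert_of_notMem hvp_notim, him_card]
    omega
  have hmidΓ : ∀ i, (friendsIn G (Pv v) (midv i)).card = 2 := by
    intro i
    rw [hgv.friendsIn_mid (fun z hz _ => hz),
      Finset.inter_eq_left.2 (by simp [R.vp_mem v] : ({vp v} : Finset N) ⊆ Pv v),
      Finset.inter_eq_left.2 (by simp [hgv.fringe_mem_P i] : ({frv i} : Finset N) ⊆ Pv v)]
    have hne2 : (vp v) ≠ frv i := (hgv.fringe_ne_top i).symm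
    rw [Finset.card_union_of_disjoint (Finset.disjoint_singleton.2 hne2),
      Finset.card_singleton, Finset.card_singleton]
  have hsumΓ : ∑ c ∈ insert (vp v) (friendsIn G (Pv v) (vp v)),
      ((friendsIn G (Pv v) c).card : ℚ) = 3 * ((k:ℚ) - 1) := by
    rw [hfrΓ, Finset.sum_insert hvp_notim]
    have h1 : ((friendsIn G (Pv v) (vp v)).card : ℚ) = ((k:ℚ) - 1) := by
      rw [hfrΓ, him_card]
      push_cast [Nat.cast_sub (by omega : 1 ≤ k)]
      ring
    have h2 : ∑ z ∈ Finset.univ.image midv, ((friendsIn G (Pv v) z).card : ℚ)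
        = 2 * ((k:ℚ) - 1) := by
      rw [Finset.sum_image (fun x _ y _ h => hgv.mid_inj h)]
      rw [Finset.sum_congr rfl (fun i _ => by rw [hmidΓ i])]
      rw [Finset.sum_const, Finset.card_univ, Fintype.card_fin, nsmul_eq_mul]
      push_cast [Nat.cast_sub (by omega : 1 ≤ k)]
      ring
    rw [h1, h2]
    ring
  have hΓlow : ((Fintype.card N : ℚ) + 1) * (3*((k:ℚ)-1)/k) - ((avgK' k : ℚ) - 1)
      ≤ utilAvgEQ G (Pv v) (vp v) := by
    have hmain := utilAvgEQ_ge (G := G) (C := Pv v) (i := vp v) (R.vp_mem v)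
      (3*((k:ℚ)-1)/k) ?_
    · rwa [hgv.card_eq] at hmain
    · rw [hDΓcard, hsumΓ]
      have hkne : (k:ℚ) ≠ 0 := by
        have : (0:ℚ) < k := by exact_mod_cast (by omega : 0 < k)
        exact ne_of_gt this
      rw [div_mul_cancel₀ _ hkne]
  -- C-side representation
  have hcastD : (((insert (vp v) (friendsIn G C (vp v))).card : ℕ) : ℚ)
      = (1:ℚ) + m + b := by
    rw [hDcard]
    push_cast
    ring
  have hCup : utilAvgEQ G C (vp v)
      = ((Fintype.card N : ℚ) + 1) *
          ((∑ c ∈ insert (vp v) (friendsIn G C (vp v)), ((friendsIn G C c).card : ℚ))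
            / ((1:ℚ) + m + b)) - ((C.card : ℚ) - 1) := by
    rw [utilAvgEQ_repr hv, hcastD]
  -- blocking inequality
  have hblock := hC.2 (vp v) hv
  rw [hΓ.1 v (vp v) (R.vp_mem v)] at hblock
  rw [hCup] at hblock
  -- final arithmetic
  have hSQ : (∑ c ∈ insert (vp v) (friendsIn G C (vp v)), ((friendsIn G C c).card : ℚ))
      ≤ 2*(m:ℚ) + 2*(b:ℚ) + (s1:ℚ) := by
    have : (((∑ c ∈ insert (vp v) (friendsIn G C (vp v)), (friendsIn G C c).card : ℕ)) : ℚ)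
        ≤ (((m + b) + (m + (b + s1)) : ℕ) : ℚ) := by exact_mod_cast hsumTot
    rw [Nat.cast_sum] at this
    calc (∑ c ∈ insert (vp v) (friendsIn G C (vp v)), ((friendsIn G C c).card : ℚ))
        ≤ (((m + b) + (m + (b + s1)) : ℕ) : ℚ) := this
      _ = 2*(m:ℚ) + 2*(b:ℚ) + (s1:ℚ) := by push_cast; ring
  have hs1b : s1 ≤ b := Finset.card_filter_le _ _
  have hs1s : s1 ≤ (H.edgeFinset.filter (fun e => v ∈ e ∧ ep e ∈ C)).card := by
    apply Finset.card_le_card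
    intro e he
    obtain ⟨he1, he2⟩ := Finset.mem_filter.1 he
    obtain ⟨hf1, hf2, -⟩ := Finset.mem_filter.1 he1
    exact Finset.mem_filter.2 ⟨hf1, hf2, he2⟩
  have hs1k : s1 + 1 ≤ k - 1 := by omega
  have hCsz1 : 1 ≤ C.card := Finset.card_pos.2 ⟨vp v, hv⟩
  exact arith_final k (avgK' k) (Fintype.card N) m b s1 C.card
    (∑ c ∈ insert (vp v) (friendsIn G C (vp v)), ((friendsIn G C c).card : ℚ))
    hk rfl hn hs1b hs1k hCsz1 hSQ (lt_of_le_of_lt hΓlow hblock)
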